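/- arXiv:1702.05902 — 4 statements merged into one kernel-verified Lean document; each statement's English description precedes it below -/
import Mathlib

section
/- Let Λ be a ring, G a finite group acting on Λ by ring automorphisms with |G| invertible in Λ, and Γ = ΛG the skew group algebra. For every left Γ-module X, the Γ-linear map F(H X) = Γ ⊗_Λ X → X sending γ ⊗ x to γx is a split epimorphism of left Γ-modules, naturally in X; that is, the natural transformation from FH to the identity functor of the category of left Γ-modules is a split epimorphism. -/
open CategoryTheory Limits DirectSum

universe u

variable {Λ Γ G : Type u} [Ring Λ] [Ring Γ] [Group G] [Fintype G]

/-- A realization of the skew group algebra `ΛG` for an action `φ` of the finite group `G` on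
the ring `Λ` by ring automorphisms: a ring `Γ` containing `Λ` (via the injective ring
homomorphism `i`) together with a group homomorphism `g : G → Γˣ` such that
`g(σ)λ = σ(λ)g(σ)` for all `λ ∈ Λ`, `σ ∈ G`, and `Γ` is free as a left `Λ`-module with
basis `(g(σ))_{σ ∈ G}`. -/
structure IsSkewGroupAlgebra (φ : G →* RingAut Λ) (i : Λ →+* Γ) (g : G →* Γˣ) : Prop where
  injective : Function.Injective i
  comm : ∀ (σ : G) (a : Λ), (g σ : Γ) * i a = i (φ σ a) * (g σ : Γ)
  free : Function.Bijective (fun c : G → Λ => ∑ σ : G, i (c σ) * (g σ : Γ))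

set_option linter.unusedSectionVars false

private lemma phi_fix (φ : G →* RingAut Λ) (hinv : IsUnit (Fintype.card G : Λ)) (σ : G) :
    φ σ (↑hinv.unit⁻¹ : Λ) = (↑hinv.unit⁻¹ : Λ) := by
  have h1 : (↑hinv.unit⁻¹ : Λ) * (Fintype.card G : Λ) = 1 := hinv.val_inv_mul
  have h2 : (Fintype.card G : Λ) * (↑hinv.unit⁻¹ : Λ) = 1 := hinv.mul_val_inv
  have h3 : φ σ (↑hinv.unit⁻¹ : Λ) * (Fintype.card G : Λ) = 1 := by
    have := congrArg (φ σ) h1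
    rwa [map_mul, map_one, map_natCast] at this
  calc φ σ (↑hinv.unit⁻¹ : Λ)
      = φ σ (↑hinv.unit⁻¹ : Λ) * ((Fintype.card G : Λ) * ↑hinv.unit⁻¹) := by rw [h2, mul_one]
    _ = (φ σ (↑hinv.unit⁻¹ : Λ) * (Fintype.card G : Λ)) * ↑hinv.unit⁻¹ := by rw [mul_assoc]
    _ = ↑hinv.unit⁻¹ := by rw [h3, one_mul]

private lemma c_comm (hinv : IsUnit (Fintype.card G : Λ)) (a : Λ) :
    a * (↑hinv.unit⁻¹ : Λ) = (↑hinv.unit⁻¹ : Λ) * a := by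
  have h : Commute (↑hinv.unit : Λ) a := by
    rw [hinv.unit_spec]; exact Nat.cast_commute _ a
  exact (h.units_inv_left).eq.symm

/-- The unit of the adjunction at a restricted module, as a morphism of `Λ`-modules. -/
noncomputable def unitApp (i : Λ →+* Γ) (F : ModuleCat.{u} Λ ⥤ ModuleCat.{u} Γ)
    (adj : F ⊣ ModuleCat.restrictScalars i) (X : ModuleCat.{u} Γ) :
    (ModuleCat.restrictScalars i).obj X ⟶
      (ModuleCat.restrictScalars i).obj (F.obj ((ModuleCat.restrictScalars i).obj X)) :=
  adj.unit.app ((ModuleCat.restrictScalars i).obj X)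

/-- The underlying function of the section of the counit: the averaged map
`x ↦ |G|⁻¹ • ∑ σ, g σ • η (g σ⁻¹ • x)`. -/
noncomputable def sectionFun (i : Λ →+* Γ) (g : G →* Γˣ)
    (F : ModuleCat.{u} Λ ⥤ ModuleCat.{u} Γ) (adj : F ⊣ ModuleCat.restrictScalars i)
    (hinv : IsUnit (Fintype.card G : Λ)) (X : ModuleCat.{u} Γ) (x : X) :
    (ModuleCat.restrictScalars i).obj (F.obj ((ModuleCat.restrictScalars i).obj X)) :=
  i (↑hinv.unit⁻¹ : Λ) • ∑ σ : G, (g σ : Γ) •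
    unitApp i F adj X (((((g σ)⁻¹ : Γˣ) : Γ) • x : X))

section lemmas

variable (φ : G →* RingAut Λ) (i : Λ →+* Γ) (g : G →* Γˣ)
    (F : ModuleCat.{u} Λ ⥤ ModuleCat.{u} Γ) (adj : F ⊣ ModuleCat.restrictScalars i)
    (hinv : IsUnit (Fintype.card G : Λ))

private lemma sectionFun_add (X : ModuleCat.{u} Γ) (x y : X) :
    sectionFun i g F adj hinv X (x + y)
      = sectionFun i g F adj hinv X x + sectionFun i g F adj hinv X y := by
  simp only [sectionFun, ← smul_add, ← Finset.sum_add_distrib]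
  refine congrArg _ (Finset.sum_congr rfl fun σ _ => congrArg _ ?_)
  rw [smul_add]
  exact (unitApp i F adj X).hom.map_add _ _

private lemma sectionFun_smul_i (hskew : IsSkewGroupAlgebra φ i g)
    (X : ModuleCat.{u} Γ) (a : Λ) (x : X) :
    sectionFun i g F adj hinv X (i a • x) = i a • sectionFun i g F adj hinv X x := by
  unfold sectionFun
  have key : ∀ σ : G, (g σ : Γ) • unitApp i F adj X (((((g σ)⁻¹ : Γˣ) : Γ) • (i a • x) : X))
      = i a • ((g σ : Γ) • unitApp i F adj X (((((g σ)⁻¹ : Γˣ) : Γ) • x : X))) := by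
    intro σ
    have e1 : ((((g σ)⁻¹ : Γˣ) : Γ) • (i a • x) : X)
        = i (φ σ⁻¹ a) • ((((g σ)⁻¹ : Γˣ) : Γ) • x : X) := by
      rw [smul_smul, smul_smul]
      congr 1
      rw [← map_inv]
      exact hskew.comm σ⁻¹ a
    have e2 : unitApp i F adj X (i (φ σ⁻¹ a) • ((((g σ)⁻¹ : Γˣ) : Γ) • x : X))
        = i (φ σ⁻¹ a) • unitApp i F adj X (((((g σ)⁻¹ : Γˣ) : Γ) • x : X)) :=
      (unitApp i F adj X).hom.map_smul (φ σ⁻¹ a) _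
    have e3 : φ σ (φ σ⁻¹ a) = a := by
      rw [map_inv]; exact (φ σ).apply_symm_apply a
    rw [e1, e2, smul_smul, smul_smul, hskew.comm σ (φ σ⁻¹ a), e3]
  rw [Finset.sum_congr rfl fun σ _ => key σ, ← Finset.smul_sum, smul_smul, smul_smul,
    ← map_mul, ← map_mul, c_comm hinv a]

private lemma sectionFun_smul_g (hskew : IsSkewGroupAlgebra φ i g)
    (X : ModuleCat.{u} Γ) (τ : G) (x : X) :
    sectionFun i g F adj hinv X ((g τ : Γ) • x)
      = (g τ : Γ) • sectionFun i g F adj hinv X x := by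
  unfold sectionFun
  have reidx : (∑ σ : G, (g σ : Γ) •
        unitApp i F adj X (((((g σ)⁻¹ : Γˣ) : Γ) • ((g τ : Γ) • x) : X)))
      = ∑ ρ : G, (g τ : Γ) • ((g ρ : Γ) •
        unitApp i F adj X (((((g ρ)⁻¹ : Γˣ) : Γ) • x : X))) := by
    refine Fintype.sum_equiv (Equiv.mulLeft τ)⁻¹ _ _ fun σ => ?_
    have hργ : ((Equiv.mulLeft τ)⁻¹ σ : G) = τ⁻¹ * σ := rfl
    rw [hργ]
    have e1 : ((((g σ)⁻¹ : Γˣ) : Γ) • ((g τ : Γ) • x) : X)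
        = ((((g (τ⁻¹ * σ))⁻¹ : Γˣ) : Γ) • x : X) := by
      rw [smul_smul, ← Units.val_mul]
      congr 2
      rw [map_mul, map_inv, mul_inv_rev, inv_inv]
    rw [e1, smul_smul, ← Units.val_mul, ← map_mul, mul_inv_cancel_left]
  rw [reidx, ← Finset.smul_sum, smul_smul, smul_smul, hskew.comm τ, phi_fix φ hinv τ]

private lemma sectionFun_smul (hskew : IsSkewGroupAlgebra φ i g)
    (X : ModuleCat.{u} Γ) (γ : Γ) (x : X) :
    sectionFun i g F adj hinv X (γ • x) = γ • sectionFun i g F adj hinv X x := by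
  obtain ⟨c, hc⟩ := hskew.free.2 γ
  simp only at hc
  subst hc
  let A : X →+ (ModuleCat.restrictScalars i).obj (F.obj ((ModuleCat.restrictScalars i).obj X)) :=
    AddMonoidHom.mk' (sectionFun i g F adj hinv X) (sectionFun_add i g F adj hinv X)
  have hA : ∀ y : X, sectionFun i g F adj hinv X y = A y := fun _ => rfl
  rw [Finset.sum_smul, hA, map_sum, Finset.sum_smul]
  refine Finset.sum_congr rfl fun σ _ => ?_
  rw [← hA, mul_smul, sectionFun_smul_i φ i g F adj hinv hskew,
    sectionFun_smul_g φ i g F adj hinv hskew, mul_smul]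

private lemma sectionFun_counit (X : ModuleCat.{u} Γ) (x : X) :
    adj.counit.app X (sectionFun i g F adj hinv X x) = x := by
  unfold sectionFun
  have tri : ∀ y : (ModuleCat.restrictScalars i).obj X,
      adj.counit.app X (unitApp i F adj X y) = y := by
    intro y
    exact ConcreteCategory.congr_hom (adj.right_triangle_components X) y
  erw [(adj.counit.app X).hom.map_smul, map_sum]
  have key : ∀ σ : G, adj.counit.app X ((g σ : Γ) •
      unitApp i F adj X (((((g σ)⁻¹ : Γˣ) : Γ) • x : X))) = x := by
    intro σ
    erw [(adj.counit.app X).hom.map_smul, tri, smul_smul, ← Units.val_mul, mul_inv_cancel,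
      Units.val_one, one_smul]
  rw [Finset.sum_congr rfl fun σ _ => key σ, Finset.sum_const, Finset.card_univ,
    ← Nat.cast_smul_eq_nsmul Γ, ← map_natCast i, smul_smul, ← map_mul, hinv.val_inv_mul,
    map_one, one_smul]

private lemma sectionFun_natural {X Y : ModuleCat.{u} Γ} (h : X ⟶ Y) (x : X) :
    sectionFun i g F adj hinv Y (h x)
      = F.map ((ModuleCat.restrictScalars i).map h) (sectionFun i g F adj hinv X x) := by
  unfold sectionFun
  have key : ∀ y : (ModuleCat.restrictScalars i).obj X,
      F.map ((ModuleCat.restrictScalars i).map h) (unitApp i F adj X y)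
        = unitApp i F adj Y (h y) := by
    intro y
    exact (ConcreteCategory.congr_hom (adj.unit.naturality ((ModuleCat.restrictScalars i).map h)) y).symm
  erw [(F.map ((ModuleCat.restrictScalars i).map h)).hom.map_smul, map_sum]
  refine congrArg _ (Finset.sum_congr rfl fun σ _ => ?_)
  erw [(F.map ((ModuleCat.restrictScalars i).map h)).hom.map_smul, key, h.hom.map_smul]
  rfl

end lemmas

/-- Let `G` be a finite group acting on a ring `Λ` with `|G|` invertible in `Λ`, and let
`Γ = ΛG` be the skew group algebra. The counit `F(H X) = Γ ⊗_Λ X → X`, `γ ⊗ x ↦ γx`, of the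
adjunction `F ⊣ H` (where `F = Γ ⊗_Λ -` is the induction functor and `H` the restriction
functor) is a split epimorphism of functors: the natural transformation `FH → 𝟭` admits a
section. -/
theorem counit_isSplitEpi_of_isSkewGroupAlgebra
    (φ : G →* RingAut Λ) (i : Λ →+* Γ) (g : G →* Γˣ)
    (hskew : IsSkewGroupAlgebra φ i g)
    (hinv : IsUnit (Fintype.card G : Λ))
    (F : ModuleCat.{u} Λ ⥤ ModuleCat.{u} Γ)
    (adj : F ⊣ ModuleCat.restrictScalars i) :
    ∃ s : 𝟭 (ModuleCat.{u} Γ) ⟶ ModuleCat.restrictScalars i ⋙ F,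
      s ≫ adj.counit = 𝟙 (𝟭 (ModuleCat.{u} Γ)) := by
  let sApp : ∀ X : ModuleCat.{u} Γ, X ⟶ (ModuleCat.restrictScalars i ⋙ F).obj X := fun X =>
    ModuleCat.ofHom
    { toFun := sectionFun i g F adj hinv X
      map_add' := sectionFun_add i g F adj hinv X
      map_smul' := sectionFun_smul φ i g F adj hinv hskew X }
  have sApp_apply : ∀ (X : ModuleCat.{u} Γ) (x : X), sApp X x = sectionFun i g F adj hinv X x :=
    fun _ _ => rfl
  refine ⟨{ app := sApp, naturality := fun X Y h => ?_ }, ?_⟩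
  · refine ModuleCat.hom_ext (LinearMap.ext fun x => ?_)
    have lhs : ((𝟭 (ModuleCat.{u} Γ)).map h ≫ sApp Y) x = sectionFun i g F adj hinv Y (h x) :=
      rfl
    have rhs : (sApp X ≫ (ModuleCat.restrictScalars i ⋙ F).map h) x
        = F.map ((ModuleCat.restrictScalars i).map h) (sectionFun i g F adj hinv X x) := rfl
    exact lhs.trans ((sectionFun_natural i g F adj hinv h x).trans rhs.symm)
  · refine NatTrans.ext (funext fun X => ?_)
    refine ModuleCat.hom_ext (LinearMap.ext fun x => ?_)
    have lhs : (sApp X ≫ adj.counit.app X) x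
        = adj.counit.app X (sectionFun i g F adj hinv X x) := rfl
    exact lhs.trans (sectionFun_counit i g F adj hinv X x)
end

section
/- Let Γ be an excellent extension of an Artin algebra Λ. If I is an injective left Λ-module, then F I = Γ ⊗_Λ I is an injective left Γ-module; that is, the induction functor F preserves injective modules. -/
open CategoryTheory Limits

universe u

variable {Λ Γ : Type u} [Ring Λ] [Ring Γ]

/-- `Γ` is right `Λ`-projective (along the inclusion `i`): for every `Γ`-module `M` and every
`Γ`-submodule `N` of `M`, if the inclusion `N → M` is a split monomorphism after restriction of
scalars to `Λ`, then it is a split monomorphism of `Γ`-modules. -/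
def RingHom.IsRightProjectiveExt (i : Λ →+* Γ) : Prop :=
  ∀ (M : ModuleCat.{u} Γ) (N : Submodule Γ M),
    IsSplitMono ((ModuleCat.restrictScalars i).map (ModuleCat.ofHom N.subtype)) →
    IsSplitMono (ModuleCat.ofHom N.subtype)

/-- `Γ` is an excellent extension of `Λ` (along the injective ring homomorphism `i`):
`Γ` is free as a left `Λ`-module and free as a right `Λ`-module with a common finite
basis `γ₁, …, γₙ` satisfying `Λγₖ = γₖΛ`, and `Γ` is right `Λ`-projective. -/
structure RingHom.IsExcellentExtension (i : Λ →+* Γ) : Prop where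
  injective : Function.Injective i
  free_common_basis : ∃ (n : ℕ) (γ : Fin n → Γ),
    Function.Bijective (fun c : Fin n → Λ => ∑ k, i (c k) * γ k) ∧
    Function.Bijective (fun c : Fin n → Λ => ∑ k, γ k * i (c k)) ∧
    ∀ k, (Set.range fun a : Λ => i a * γ k) = Set.range fun a : Λ => γ k * i a
  rightProjective : i.IsRightProjectiveExt

namespace ExcAux

/-- Twist of a module structure along a ring endomorphism. -/
@[nolint unusedArguments]
def Twisted {R : Type u} [Ring R] (_σ : R →+* R) (M : Type u) : Type u := M

variable {R : Type u} [Ring R]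

/-- identity, into the twist -/
def Twisted.mk (σ : R →+* R) (M : Type u) (x : M) : Twisted σ M := x

/-- identity, out of the twist -/
def Twisted.out (σ : R →+* R) (M : Type u) (x : Twisted σ M) : M := x

instance (σ : R →+* R) (M : Type u) [AddCommGroup M] : AddCommGroup (Twisted σ M) :=
  inferInstanceAs (AddCommGroup M)

instance (σ : R →+* R) (M : Type u) [AddCommGroup M] [Module R M] :
    Module R (Twisted σ M) := Module.compHom M σ

lemma Twisted.smul_def (σ : R →+* R) (M : Type u) [AddCommGroup M] [Module R M]
    (a : R) (x : Twisted σ M) : a • x = Twisted.mk σ M (σ a • Twisted.out σ M x) := rfl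

lemma Twisted.out_add (σ : R →+* R) (M : Type u) [AddCommGroup M]
    (x y : Twisted σ M) : Twisted.out σ M (x + y) = Twisted.out σ M x + Twisted.out σ M y := rfl

theorem twisted_injective (e : R ≃+* R) (M : Type u) [AddCommGroup M] [Module R M]
    (h : Module.Injective R M) :
    Module.Injective R (Twisted (e : R →+* R) M) := by
  constructor
  intro X Y _ _ _ _ f hf g
  let f' : Twisted (e.symm : R →+* R) X →ₗ[R] Twisted (e.symm : R →+* R) Y :=
    { toFun := fun x => Twisted.mk _ _ (f (Twisted.out _ _ x))
      map_add' := fun x y => f.map_add _ _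
      map_smul' := fun a x => f.map_smul (e.symm a) (Twisted.out _ _ x) }
  let g' : Twisted (e.symm : R →+* R) X →ₗ[R] M :=
    { toFun := fun x => Twisted.out (e : R →+* R) M (g (Twisted.out _ _ x))
      map_add' := fun x y => by
        exact g.map_add x y
      map_smul' := fun a x => by
        change Twisted.out (e : R →+* R) M (g ((e.symm a : R) • (Twisted.out _ _ x)))
          = a • Twisted.out (e : R →+* R) M (g (Twisted.out _ _ x))
        rw [g.map_smul]
        change e (e.symm a) • Twisted.out (e : R →+* R) M (g (Twisted.out _ _ x)) = _
        rw [e.apply_symm_apply] }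
  have hf' : Function.Injective f' := hf
  obtain ⟨h', hh⟩ := h.out f' hf' g'
  refine ⟨{ toFun := fun y => Twisted.mk _ _ (h' (Twisted.mk _ _ y))
            map_add' := fun x y => h'.map_add _ _
            map_smul' := fun a y => ?_ }, fun x => ?_⟩
  · have h1 := h'.map_smul (e a) (Twisted.mk (e.symm : R →+* R) Y y)
    change h' (((e a : R) • (Twisted.mk (e.symm : R →+* R) Y y) : Twisted (e.symm : R →+* R) Y))
      = (e a) • h' (Twisted.mk (e.symm : R →+* R) Y y) at h1
    change Twisted.mk (e : R →+* R) M (h' (Twisted.mk _ _ ((a : R) • y)))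
      = Twisted.mk (e : R →+* R) M ((e a) • h' (Twisted.mk _ _ y))
    rw [← h1]
    have h2 : Twisted.mk (e.symm : R →+* R) Y ((a : R) • y)
        = ((e a : R) • Twisted.mk (e.symm : R →+* R) Y y : Twisted (e.symm : R →+* R) Y) := by
      change _ = Twisted.mk (e.symm : R →+* R) Y ((e.symm (e a) : R) • y)
      rw [e.symm_apply_apply]
    rw [h2]
  · exact hh x

theorem pi_injective {n : ℕ} (M : Fin n → Type u) [∀ k, AddCommGroup (M k)]
    [∀ k, Module R (M k)] (h : ∀ k, Module.Injective R (M k)) :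
    Module.Injective R (∀ k, M k) := by
  constructor
  intro X Y _ _ _ _ f hf g
  choose h' hh using fun k => (h k).out f hf ((LinearMap.proj k).comp g)
  exact ⟨LinearMap.pi h', fun x => funext fun k => hh k x⟩

theorem injective_of_equiv {M N : Type u} [AddCommGroup M] [Module R M] [AddCommGroup N]
    [Module R N] (e : M ≃ₗ[R] N) (h : Module.Injective R M) : Module.Injective R N := by
  constructor
  intro X Y _ _ _ _ f hf g
  obtain ⟨h', hh⟩ := h.out f hf (e.symm.toLinearMap.comp g)
  exact ⟨e.toLinearMap.comp h', fun x => by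
    simpa using congrArg e (hh x)⟩


variable {Λ Γ : Type u} [Ring Λ] [Ring Γ]

theorem key (i : Λ →+* Γ) {n : ℕ} {γ : Fin n → Γ}
    (h1 : Function.Bijective fun c : Fin n → Λ => ∑ k, i (c k) * γ k)
    (h2 : Function.Bijective fun c : Fin n → Λ => ∑ k, γ k * i (c k))
    (h3 : ∀ k, (Set.range fun a : Λ => i a * γ k) = Set.range fun a : Λ => γ k * i a)
    (F : ModuleCat.{u} Λ ⥤ ModuleCat.{u} Γ)
    (adj : F ⊣ ModuleCat.restrictScalars i)
    (I : ModuleCat.{u} Λ) (hI : Injective I) :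
    Injective ((ModuleCat.restrictScalars i).obj (F.obj I)) := by
  classical
  -- sums of single functions
  have hsingle : ∀ (k : Fin n) (b : Λ), (∑ l, i ((Pi.single k b : Fin n → Λ) l) * γ l) = i b * γ k := by
    intro k b
    rw [Fintype.sum_eq_single k]
    · rw [Pi.single_eq_same]
    · intro l hl
      rw [Pi.single_eq_of_ne hl, map_zero, zero_mul]
  -- uniqueness of coefficients
  have huniq : ∀ (k : Fin n) (b b' : Λ), i b * γ k = i b' * γ k → b = b' := by
    intro k b b' hb
    have h := h1.1 (a₁ := Pi.single k b) (a₂ := Pi.single k b')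
      (by simp only []; rw [hsingle, hsingle, hb])
    have := congrFun h k
    simpa using this
  have huniq' : ∀ (k : Fin n) (a a' : Λ), γ k * i a = γ k * i a' → a = a' := by
    intro k a a' ha
    have hsingle' : ∀ (b : Λ), (∑ l, γ l * i ((Pi.single k b : Fin n → Λ) l)) = γ k * i b := by
      intro b
      rw [Fintype.sum_eq_single k]
      · rw [Pi.single_eq_same]
      · intro l hl
        rw [Pi.single_eq_of_ne hl, map_zero, mul_zero]
    have h := h2.1 (a₁ := Pi.single k a) (a₂ := Pi.single k a')
      (by simp only []; rw [hsingle', hsingle', ha])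
    have := congrFun h k
    simpa using this
  -- the twisting automorphisms
  have hex : ∀ (k : Fin n) (a : Λ), ∃ b, i b * γ k = γ k * i a := by
    intro k a
    have : γ k * i a ∈ Set.range fun a : Λ => γ k * i a := ⟨a, rfl⟩
    rw [← h3 k] at this
    exact this
  have hex' : ∀ (k : Fin n) (b : Λ), ∃ a, γ k * i a = i b * γ k := by
    intro k b
    have : i b * γ k ∈ Set.range fun a : Λ => i a * γ k := ⟨b, rfl⟩
    rw [h3 k] at this
    exact this
  have hτf : ∀ k a, i ((hex k a).choose) * γ k = γ k * i a := fun k a => (hex k a).choose_spec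
  have hσf : ∀ k b, γ k * i ((hex' k b).choose) = i b * γ k := fun k b => (hex' k b).choose_spec
  let τ : Fin n → (Λ ≃+* Λ) := fun k =>
    { toFun := fun a => (hex k a).choose
      invFun := fun b => (hex' k b).choose
      left_inv := fun a => huniq' k _ _ (by rw [hσf, hτf])
      right_inv := fun b => huniq k _ _ (by rw [hτf, hσf])
      map_mul' := fun a a' => huniq k _ _ (by
        show i ((hex k (a * a')).choose) * γ k
          = i ((hex k a).choose * (hex k a').choose) * γ k
        rw [hτf, map_mul, map_mul, mul_assoc, hτf, ← mul_assoc, ← mul_assoc, hτf])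
      map_add' := fun a a' => huniq k _ _ (by
        show i ((hex k (a + a')).choose) * γ k
          = i ((hex k a).choose + (hex k a').choose) * γ k
        rw [hτf, map_add, map_add, mul_add, add_mul, hτf, hτf]) }
  have hτ : ∀ k a, i (τ k a) * γ k = γ k * i a := hτf
  have hσ : ∀ k b, γ k * i ((τ k).symm b) = i b * γ k := hσf
  -- left coordinates
  let e1 : (Fin n → Λ) ≃ Γ := Equiv.ofBijective _ h1
  let q : Γ → Fin n → Λ := fun g => e1.symm g
  have hq : ∀ g, (∑ k, i (q g k) * γ k) = g := fun g => e1.apply_symm_apply g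
  have hq_uniq : ∀ (c : Fin n → Λ) (g : Γ), (∑ k, i (c k) * γ k) = g → c = q g :=
    fun c g hc => (Equiv.eq_symm_apply e1).mpr hc
  have hq_add : ∀ g g', q (g + g') = q g + q g' := by
    intro g g'
    refine (hq_uniq _ _ ?_).symm
    simp only [Pi.add_apply, map_add, add_mul, Finset.sum_add_distrib, hq]
  have hq_smul : ∀ (a : Λ) (g : Γ), q (i a * g) = fun k => a * q g k := by
    intro a g
    refine (hq_uniq _ _ ?_).symm
    simp only [map_mul, mul_assoc, ← Finset.mul_sum]
    rw [hq]
  have hq_right : ∀ (g : Γ) (a : Λ), q (g * i a) = fun k => q g k * τ k a := by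
    intro g a
    refine (hq_uniq _ _ ?_).symm
    calc (∑ k, i (q g k * τ k a) * γ k) = ∑ k, i (q g k) * (i (τ k a) * γ k) := by
          simp only [map_mul, mul_assoc]
      _ = ∑ k, i (q g k) * (γ k * i a) := by simp only [hτ]
      _ = (∑ k, i (q g k) * γ k) * i a := by
          rw [Finset.sum_mul]; simp only [mul_assoc]
      _ = g * i a := by rw [hq]
  have hq_basis : ∀ k : Fin n, q (γ k) = Pi.single k 1 := by
    intro k
    refine (hq_uniq _ _ ?_).symm
    rw [hsingle, map_one, one_mul]
  -- right coordinates
  let e2 : (Fin n → Λ) ≃ Γ := Equiv.ofBijective _ h2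
  let p : Γ → Fin n → Λ := fun g => e2.symm g
  have hp : ∀ g, (∑ k, γ k * i (p g k)) = g := fun g => e2.apply_symm_apply g
  -- the comparison map
  set P := F.obj I with hP_def
  set η : I ⟶ (ModuleCat.restrictScalars i).obj P := adj.unit.app I with hη_def
  have hu_smul : ∀ (a : Λ) (y : I), η (a • y) = i a • η y := fun a y => η.hom.map_smul a y
  set Φ : (Fin n → I) → ((ModuleCat.restrictScalars i).obj P) :=
    fun x => ∑ k, γ k • η (x k) with hΦ_def
  have hΦ_add : ∀ x y, Φ (x + y) = Φ x + Φ y := by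
    intro x y
    simp only [hΦ_def, Pi.add_apply, map_add, smul_add, Finset.sum_add_distrib]
  have hΦ_smul : ∀ (a : Λ) (x : Fin n → I), i a • Φ x = Φ (fun k => (τ k).symm a • x k) := by
    intro a x
    simp only [hΦ_def, Finset.smul_sum]
    refine Finset.sum_congr rfl fun k _ => ?_
    rw [smul_smul, ← hσ, mul_smul, ← hu_smul]
  have hΦ_g : ∀ (g : Γ) (x : Fin n → I), Φ (fun j => ∑ k, p (g * γ k) j • x k) = g • Φ x := by
    intro g x
    simp only [hΦ_def]
    calc (∑ j, γ j • η (∑ k, p (g * γ k) j • x k))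
        = ∑ j, ∑ k, (γ j * i (p (g * γ k) j)) • η (x k) := by
          refine Finset.sum_congr rfl fun j _ => ?_
          rw [map_sum, Finset.smul_sum]
          refine Finset.sum_congr rfl fun k _ => ?_
          rw [hu_smul, smul_smul]
      _ = ∑ k, ∑ j, (γ j * i (p (g * γ k) j)) • η (x k) := Finset.sum_comm
      _ = ∑ k, (g * γ k) • η (x k) := by
          refine Finset.sum_congr rfl fun k _ => ?_
          rw [← Finset.sum_smul, hp]
      _ = g • ∑ k, γ k • η (x k) := by
          simp only [Finset.smul_sum, mul_smul]
  -- surjectivity of Φ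
  have hsurj : Function.Surjective Φ := by
    let S : Submodule Γ P :=
      { carrier := Set.range Φ
        add_mem' := by
          rintro _ _ ⟨x, rfl⟩ ⟨y, rfl⟩
          exact ⟨x + y, hΦ_add x y⟩
        zero_mem' := ⟨0, by simp [hΦ_def]; rfl⟩
        smul_mem' := by
          rintro g _ ⟨x, rfl⟩
          exact ⟨fun j => ∑ k, p (g * γ k) j • x k, hΦ_g g x⟩ }
    have hη_mem : ∀ y : I, η y ∈ S := by
      intro y
      refine ⟨fun k => p 1 k • y, ?_⟩
      simp only [hΦ_def]
      calc (∑ k, γ k • η (p 1 k • y)) = ∑ k, (γ k * i (p 1 k)) • η y := by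
            refine Finset.sum_congr rfl fun k _ => ?_
            rw [hu_smul, smul_smul]
        _ = (∑ k, γ k * i (p 1 k)) • η y := by rw [Finset.sum_smul]
        _ = η y := by rw [hp, one_smul]
    let Sc : ModuleCat Γ := ModuleCat.of Γ S
    let η' : I ⟶ (ModuleCat.restrictScalars i).obj Sc :=
      ModuleCat.ofHom (X := I) (Y := (ModuleCat.restrictScalars i).obj Sc)
      { toFun := fun y => (⟨η y, hη_mem y⟩ : S)
        map_add' := fun y z => Subtype.ext (η.hom.map_add y z)
        map_smul' := fun a y => Subtype.ext (hu_smul a y) }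
    let gS : P ⟶ Sc := (adj.homEquiv I Sc).symm η'
    have hcomp : gS ≫ ModuleCat.ofHom S.subtype = 𝟙 P := by
      apply (adj.homEquiv I P).injective
      rw [Adjunction.homEquiv_naturality_right, Equiv.apply_symm_apply,
        Adjunction.homEquiv_id]
      exact ModuleCat.hom_ext (LinearMap.ext fun y => rfl)
    intro z
    have hz : (ModuleCat.ofHom S.subtype) (gS z) = z := DFunLike.congr_fun (congrArg ModuleCat.Hom.hom hcomp) z
    obtain ⟨x, hx⟩ := (gS z).2
    exact ⟨x, by rw [hx]; exact hz⟩
  -- injectivity of Φ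
  have hinj : Function.Injective Φ := by
    intro x y hxy
    funext j
    set σj : Λ →+* Λ := (((τ j).symm : Λ ≃+* Λ) : Λ →+* Λ) with hσj_def
    have hq_add' : ∀ g g' : Γ, q (g + g') j = q g j + q g' j := fun g g' => by
      rw [hq_add]; rfl
    have hq_smul' : ∀ (a : Λ) (g : Γ), q (i a * g) j = a * q g j := fun a g => by
      rw [hq_smul]
    have hq_right' : ∀ (g : Γ) (a : Λ), q (g * i a) j = q g j * τ j a := fun g a => by
      rw [hq_right]
    let Ij : ModuleCat Λ := ModuleCat.of Λ (Twisted σj I)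
    let Mj : ModuleCat Γ := (ModuleCat.coextendScalars i).obj Ij
    let gx : I → ((ModuleCat.restrictScalars i).obj (ModuleCat.of Γ Γ) →ₗ[Λ] Ij) := fun z =>
      { toFun := fun g => Twisted.mk σj I (σj (q g j) • z)
        map_add' := fun (g g' : Γ) => by
          change Twisted.mk σj I (σj (q (@HAdd.hAdd Γ Γ Γ _ g g') j) • z)
            = Twisted.mk σj I (σj (q g j) • z) + Twisted.mk σj I (σj (q g' j) • z)
          rw [hq_add', map_add, add_smul]
          rfl
        map_smul' := fun a (g : Γ) => by
          change Twisted.mk σj I (σj (q (@HMul.hMul Γ Γ Γ _ (i a) g) j) • z)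
            = Twisted.mk σj I (σj a • (σj (q g j) • z))
          rw [hq_smul', map_mul, mul_smul] }
    let φj : I ⟶ (ModuleCat.restrictScalars i).obj Mj :=
      ModuleCat.ofHom (X := I) (Y := (ModuleCat.restrictScalars i).obj Mj)
      { toFun := gx
        map_add' := fun z z' => LinearMap.ext fun g => by
          change Twisted.mk σj I (σj (q g j) • (z + z'))
            = Twisted.mk σj I (σj (q g j) • z) + Twisted.mk σj I (σj (q g j) • z')
          rw [smul_add]
          rfl
        map_smul' := fun a z => LinearMap.ext fun (g : Γ) => by
          change Twisted.mk σj I (σj (q g j) • (a • z))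
            = Twisted.mk σj I (σj (q (@HMul.hMul Γ Γ Γ _ g (i a)) j) • z)
          rw [hq_right', map_mul]
          have : σj (τ j a) = a := (τ j).symm_apply_apply a
          rw [this, mul_smul] }
    let gj : P ⟶ Mj := (adj.homEquiv I Mj).symm φj
    have hgη : ∀ z : I, gj (η z) = φj z := by
      intro z
      have h0 : adj.homEquiv I Mj gj = φj := Equiv.apply_symm_apply _ _
      rw [Adjunction.homEquiv_unit] at h0
      exact congrArg (fun f => ModuleCat.Hom.hom f z) h0
    let one' : ((ModuleCat.restrictScalars i).obj (ModuleCat.of Γ Γ)) := (1 : Γ)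
    let evh : ((ModuleCat.restrictScalars i).obj Mj) →+ Twisted σj I :=
      { toFun := fun h =>
          (show ((ModuleCat.restrictScalars i).obj (ModuleCat.of Γ Γ)) →ₗ[Λ] Twisted σj I
            from h) one'
        map_zero' := rfl
        map_add' := fun a b => rfl }
    have hev : ∀ x : Fin n → I, evh (gj (Φ x)) = Twisted.mk σj I (x j) := by
      intro x
      have h1 : (gj (Φ x) : ((ModuleCat.restrictScalars i).obj Mj))
          = ∑ k, γ k • φj (x k) := by
        simp only [hΦ_def]
        erw [map_sum gj.hom]
        refine Finset.sum_congr rfl fun k _ => ?_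
        exact (gj.hom.map_smul (γ k) (η (x k))).trans (congrArg (γ k • ·) (hgη (x k)))
      rw [h1, map_sum]
      have h2 : ∀ k, evh (γ k • φj (x k))
          = Twisted.mk σj I (σj ((Pi.single k 1 : Fin n → Λ) j) • x k) := by
        intro k
        have e0 : evh (γ k • φj (x k))
            = Twisted.mk σj I (σj (q (@HMul.hMul Γ Γ Γ _ (1 : Γ) (γ k)) j) • x k) := rfl
        rw [e0, one_mul, hq_basis]
      rw [Finset.sum_congr rfl fun k _ => h2 k, Fintype.sum_eq_single j]
      · rw [Pi.single_eq_same, map_one, one_smul]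
      · intro k hk
        rw [Pi.single_eq_of_ne' hk, map_zero, zero_smul]
        rfl
    have hxyj := (hev x).symm.trans ((congrArg (fun w => evh (gj w)) hxy).trans (hev y))
    exact congrArg (Twisted.out σj I) hxyj
  -- assemble everything
  haveI hIobj : Injective (ModuleCat.of Λ I) := hI
  have hIinj : Module.Injective Λ I := Module.injective_module_of_injective_object Λ I
  have hIk : ∀ k : Fin n, Module.Injective Λ (Twisted (((τ k).symm : Λ ≃+* Λ) : Λ →+* Λ) I) :=
    fun k => twisted_injective (τ k).symm I hIinj
  have hprod : Module.Injective Λ (∀ k, Twisted (((τ k).symm : Λ ≃+* Λ) : Λ →+* Λ) I) :=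
    pi_injective _ hIk
  let Φₗ : (∀ k, Twisted (((τ k).symm : Λ ≃+* Λ) : Λ →+* Λ) I)
      →ₗ[Λ] ((ModuleCat.restrictScalars i).obj P) :=
    { toFun := fun x => Φ (fun k => Twisted.out _ _ (x k))
      map_add' := fun x y => hΦ_add _ _
      map_smul' := fun a x => (hΦ_smul a (fun k => Twisted.out _ _ (x k))).symm }
  have hbij : Function.Bijective Φₗ := by
    constructor
    · intro a b hab
      exact hinj hab
    · intro z
      obtain ⟨x, hx⟩ := hsurj z
      exact ⟨x, hx⟩
  have hfin : Module.Injective Λ ((ModuleCat.restrictScalars i).obj P) :=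
    injective_of_equiv (LinearEquiv.ofBijective Φₗ hbij) hprod
  have hobj : Injective (ModuleCat.of Λ ((ModuleCat.restrictScalars i).obj P)) :=
    Module.injective_object_of_injective_module Λ _ (inj := hfin)
  exact hobj

end ExcAux

/-- Let `Γ` be an excellent extension of an Artin algebra `Λ`. Then the induction functor
`F = Γ ⊗_Λ -` (encoded as a left adjoint of the restriction of scalars functor) preserves
injective modules. -/
theorem induction_preserves_injective_of_isExcellentExtension
    (R : Type u) [CommRing R] [IsArtinianRing R] [Algebra R Λ] [Module.Finite R Λ]
    (i : Λ →+* Γ) (hexc : i.IsExcellentExtension)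
    (F : ModuleCat.{u} Λ ⥤ ModuleCat.{u} Γ)
    (adj : F ⊣ ModuleCat.restrictScalars i)
    (I : ModuleCat.{u} Λ) (hI : Injective I) :
    Injective (F.obj I) := by
  obtain ⟨n, γ₀, h1, h2, h3⟩ := hexc.free_common_basis
  have hHFI : Injective ((ModuleCat.restrictScalars i).obj (F.obj I)) :=
    ExcAux.key i h1 h2 h3 F adj I hI
  haveI : EnoughInjectives (ModuleCat.{u} Γ) := inferInstance
  set E := Injective.under (F.obj I) with hE_def
  set ι := Injective.ι (F.obj I) with hι_def
  have hιinj : Function.Injective ι := (ModuleCat.mono_iff_injective ι).mp inferInstance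
  set N : Submodule Γ E := LinearMap.range ι.hom with hN_def
  let e : F.obj I ≅ ModuleCat.of Γ N := (LinearEquiv.ofInjective ι.hom hιinj).toModuleIso
  have hNres : Injective ((ModuleCat.restrictScalars i).obj (ModuleCat.of Γ N)) :=
    Injective.of_iso ((ModuleCat.restrictScalars i).mapIso e) hHFI
  haveI : Mono (ModuleCat.ofHom N.subtype) :=
    (ModuleCat.mono_iff_injective _).mpr N.injective_subtype
  haveI : Mono ((ModuleCat.restrictScalars i).map (ModuleCat.ofHom N.subtype)) :=
    inferInstance
  haveI := hNres
  have hsplitΛ : IsSplitMono ((ModuleCat.restrictScalars i).map (ModuleCat.ofHom N.subtype)) :=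
    IsSplitMono.mk' { retraction := Injective.factorThru (𝟙 _) _,
                      id := Injective.comp_factorThru _ _ }
  haveI hsplitΓ : IsSplitMono (ModuleCat.ofHom N.subtype) := hexc.rightProjective E N hsplitΛ
  have hNinj : Injective (ModuleCat.of Γ N) := by
    constructor
    intro X Y g f hf
    haveI : Injective (ModuleCat.of Γ E) := (inferInstance : Injective E)
    obtain ⟨h, hh⟩ := Injective.factors (g ≫ ModuleCat.ofHom N.subtype) f
    exact ⟨h ≫ retraction (ModuleCat.ofHom N.subtype), by
      rw [← Category.assoc, hh, Category.assoc, IsSplitMono.id, Category.comp_id]⟩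
  exact Injective.of_iso e.symm hNinj
end

section
/- Let Γ be an excellent extension of an Artin algebra Λ. If there exists an injective resolution 0 → Λ → I⁰ → I¹ → ⋯ of Λ as a left Λ-module with pd_Λ I^i ≤ i for every i ≥ 0, then there exists an injective resolution 0 → Γ → J⁰ → J¹ → ⋯ of Γ as a left Γ-module with pd_Γ J^i ≤ i for every i ≥ 0. -/
open CategoryTheory Limits

universe u

variable {Λ Γ : Type u} [Ring Λ] [Ring Γ]

/-- `M` admits an injective resolution of length at most `n`. -/
def HasInjDimLE (R : Type u) [Ring R] : ℕ → ModuleCat.{u} R → Prop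
  | 0, M => Injective M
  | n + 1, M => ∃ (I : ModuleCat.{u} R) (f : M ⟶ I),
      Injective I ∧ Mono f ∧ HasInjDimLE R n (cokernel f)

/-- The injective dimension of a module, as an element of `ℕ∞`: the smallest length of an
injective resolution, or `⊤` if there is no injective resolution of finite length. -/
noncomputable def injDim (R : Type u) [Ring R] (M : ModuleCat.{u} R) : ℕ∞ :=
  sInf {d : ℕ∞ | ∃ n : ℕ, d = n ∧ HasInjDimLE R n M}

/-- `M` admits a projective resolution of length at most `n`. -/
def HasProjDimLE (R : Type u) [Ring R] : ℕ → ModuleCat.{u} R → Prop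
  | 0, M => Projective M
  | n + 1, M => ∃ (P : ModuleCat.{u} R) (f : P ⟶ M),
      Projective P ∧ Epi f ∧ HasProjDimLE R n (kernel f)

/-- The projective dimension of a module, as an element of `ℕ∞`. -/
noncomputable def projDim (R : Type u) [Ring R] (M : ModuleCat.{u} R) : ℕ∞ :=
  sInf {d : ℕ∞ | ∃ n : ℕ, d = n ∧ HasProjDimLE R n M}

namespace ExcProofAux

open ZeroObject

structure ExcData (i : Λ →+* Γ) where
  n : ℕ
  γ : Fin n → Γ
  hR : Function.Bijective fun c : Fin n → Λ => ∑ k, γ k * i (c k)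
  hL : Function.Injective fun c : Fin n → Λ => ∑ k, i (c k) * γ k
  hcomm : ∀ k, (Set.range fun a : Λ => i a * γ k) = Set.range fun a : Λ => γ k * i a

variable {i : Λ →+* Γ} (D : ExcData i)

/-- right coordinates -/
noncomputable def ExcData.c (g : Γ) : Fin D.n → Λ :=
  (Equiv.ofBijective _ D.hR).symm g

lemma ExcData.sum_c (g : Γ) : ∑ k, D.γ k * i (D.c g k) = g :=
  (Equiv.ofBijective _ D.hR).apply_symm_apply g

lemma ExcData.c_eq {d : Fin D.n → Λ} {g : Γ} (h : ∑ k, D.γ k * i (d k) = g) :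
    D.c g = d := by
  have : (Equiv.ofBijective _ D.hR) d = g := h
  rw [← this, ExcData.c, Equiv.symm_apply_apply]

lemma ExcData.c_add (g h : Γ) : D.c (g + h) = D.c g + D.c h := by
  refine D.c_eq ?_
  simp only [Pi.add_apply, map_add, mul_add, Finset.sum_add_distrib, D.sum_c]

lemma ExcData.c_zero : D.c 0 = 0 := by
  refine D.c_eq ?_; simp

lemma ExcData.c_mul_right (g : Γ) (a : Λ) :
    D.c (g * i a) = fun k => D.c g k * a := by
  refine D.c_eq ?_
  conv_rhs => rw [← D.sum_c g]
  rw [Finset.sum_mul]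
  simp [mul_assoc]

lemma ExcData.c_gamma (j : Fin D.n) : D.c (D.γ j) = Pi.single j 1 := by
  refine D.c_eq ?_
  rw [Finset.sum_eq_single j]
  · simp
  · intro k _ hk; simp [Pi.single_eq_of_ne hk]
  · simp

lemma ExcData.c_gamma_mul (j : Fin D.n) (a : Λ) :
    D.c (D.γ j * i a) = Pi.single j a := by
  rw [D.c_mul_right, D.c_gamma]
  funext k
  by_cases hk : k = j
  · subst hk; simp
  · simp [Pi.single_eq_of_ne hk]

lemma ExcData.c_mul (g h : Γ) (j : Fin D.n) :
    D.c (g * h) j = ∑ l, D.c (g * D.γ l) j * D.c h l := by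
  have : D.c (g * h) = fun j => ∑ l, D.c (g * D.γ l) j * D.c h l := by
    refine D.c_eq ?_
    conv_rhs => rw [← D.sum_c h]
    rw [Finset.mul_sum]
    have : ∀ l, g * (D.γ l * i (D.c h l)) = ∑ j, D.γ j * i (D.c (g * D.γ l) j * D.c h l) := by
      intro l
      have h1 : g * (D.γ l * i (D.c h l)) = (∑ j, D.γ j * i (D.c (g * D.γ l) j)) * i (D.c h l) := by
        rw [D.sum_c, mul_assoc]
      rw [h1, Finset.sum_mul]
      simp [mul_assoc]
    simp only [this]
    rw [Finset.sum_comm]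
    simp [Finset.mul_sum]
  rw [this]

/-- the twisting maps: `i a * γ k = γ k * i (σ k a)` -/
noncomputable def ExcData.sigma (k : Fin D.n) (a : Λ) : Λ :=
  D.c (i a * D.γ k) k

lemma ExcData.c_i_mul_gamma (k : Fin D.n) (a : Λ) :
    D.c (i a * D.γ k) = Pi.single k (D.sigma k a) := by
  obtain ⟨b, hb⟩ : i a * D.γ k ∈ Set.range fun a : Λ => D.γ k * i a := by
    rw [← D.hcomm k]; exact ⟨a, rfl⟩
  have h1 : D.c (i a * D.γ k) = Pi.single k b := by
    rw [← hb, D.c_gamma_mul]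
  rw [ExcData.sigma, h1, Pi.single_eq_same]

lemma ExcData.gamma_sigma (k : Fin D.n) (a : Λ) :
    D.γ k * i (D.sigma k a) = i a * D.γ k := by
  conv_rhs => rw [← D.sum_c (i a * D.γ k)]
  rw [D.c_i_mul_gamma, Finset.sum_eq_single k]
  · rw [Pi.single_eq_same]
  · intro j _ hj; simp [Pi.single_eq_of_ne hj]
  · simp

lemma ExcData.sigma_one (k : Fin D.n) : D.sigma k 1 = 1 := by
  have : D.c (i 1 * D.γ k) = Pi.single k (1 : Λ) := by
    rw [map_one, one_mul, D.c_gamma]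
  rw [ExcData.sigma, this, Pi.single_eq_same]

lemma ExcData.sigma_mul (k : Fin D.n) (a b : Λ) :
    D.sigma k (a * b) = D.sigma k a * D.sigma k b := by
  have h1 : i (a * b) * D.γ k = D.γ k * i (D.sigma k a * D.sigma k b) := by
    rw [map_mul, mul_assoc, ← D.gamma_sigma k b, ← mul_assoc, ← D.gamma_sigma k a,
      mul_assoc, ← map_mul]
  have h2 : D.c (i (a * b) * D.γ k) = Pi.single k (D.sigma k a * D.sigma k b) := by
    rw [h1, D.c_gamma_mul]
  rw [ExcData.sigma, h2, Pi.single_eq_same]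

lemma ExcData.sigma_add (k : Fin D.n) (a b : Λ) :
    D.sigma k (a + b) = D.sigma k a + D.sigma k b := by
  have h1 : i (a + b) * D.γ k = D.γ k * i (D.sigma k a + D.sigma k b) := by
    rw [map_add, add_mul, map_add, mul_add, D.gamma_sigma, D.gamma_sigma]
  have h2 : D.c (i (a + b) * D.γ k) = Pi.single k (D.sigma k a + D.sigma k b) := by
    rw [h1, D.c_gamma_mul]
  rw [ExcData.sigma, h2, Pi.single_eq_same]

lemma ExcData.sigma_surjective (k : Fin D.n) : Function.Surjective (D.sigma k) := by
  intro b
  obtain ⟨a, ha⟩ : D.γ k * i b ∈ Set.range fun a : Λ => i a * D.γ k := by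
    rw [D.hcomm k]; exact ⟨b, rfl⟩
  refine ⟨a, ?_⟩
  have ha' : i a * D.γ k = D.γ k * i b := ha
  have h2 : D.c (i a * D.γ k) = Pi.single k b := by rw [ha', D.c_gamma_mul]
  rw [ExcData.sigma, h2, Pi.single_eq_same]

lemma ExcData.sigma_injective (k : Fin D.n) : Function.Injective (D.sigma k) := by
  intro a a' h
  have h1 : i a * D.γ k = i a' * D.γ k := by
    rw [← D.gamma_sigma k a, ← D.gamma_sigma k a', h]
  have h2 : ∀ x : Λ, ∑ j, i (Pi.single (M := fun _ => Λ) k x j) * D.γ j = i x * D.γ k := by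
    intro x
    rw [Finset.sum_eq_single k]
    · rw [Pi.single_eq_same]
    · intro j _ hj; simp [Pi.single_eq_of_ne hj]
    · simp
  have := D.hL (a₁ := Pi.single k a) (a₂ := Pi.single k a')
    (by show ∑ j, i ((Pi.single k a : Fin D.n → Λ) j) * D.γ j
          = ∑ j, i ((Pi.single k a' : Fin D.n → Λ) j) * D.γ j
        rw [h2, h2, h1])
  have := congrFun this k
  simpa using this

/-- the twist as a ring hom -/
noncomputable def ExcData.σ (k : Fin D.n) : Λ →+* Λ where
  toFun := D.sigma k
  map_one' := D.sigma_one k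
  map_mul' := D.sigma_mul k
  map_zero' := by
    have := D.sigma_add k 0 0
    simpa using this
  map_add' := D.sigma_add k

noncomputable def ExcData.σinv (k : Fin D.n) : Λ →+* Λ :=
  (RingEquiv.ofBijective (D.σ k) ⟨D.sigma_injective k, D.sigma_surjective k⟩).symm.toRingHom

lemma ExcData.c_i (a : Λ) : D.c (i a) = fun k => D.c 1 k * a := by
  have := D.c_mul_right 1 a
  rw [one_mul] at this
  exact this

lemma ExcData.c_i' (a : Λ) : D.c (i a) = fun k => D.sigma k a * D.c 1 k := by
  refine D.c_eq ?_
  have : ∀ k : Fin D.n, D.γ k * i (D.sigma k a * D.c 1 k)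
      = i a * (D.γ k * i (D.c 1 k)) := by
    intro k
    rw [map_mul, ← mul_assoc, D.gamma_sigma, mul_assoc]
  simp only [this]
  rw [← Finset.mul_sum, D.sum_c, mul_one]

section TMod

variable (M : Type u) [AddCommGroup M] [Module Λ M]

/-- the underlying type of the induced module `Γ ⊗_Λ M` -/
def ExcData.TMod : Type u := Fin D.n → M

instance : AddCommGroup (D.TMod M) := inferInstanceAs (AddCommGroup (Fin D.n → M))

noncomputable instance : SMul Γ (D.TMod M) :=
  ⟨fun g m j => ∑ k, D.c (g * D.γ k) j • m k⟩

lemma ExcData.tsmul_def (g : Γ) (m : D.TMod M) (j : Fin D.n) :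
    (g • m) j = ∑ k, D.c (g * D.γ k) j • m k := rfl

lemma ExcData.tadd_apply (m m' : D.TMod M) (j : Fin D.n) : (m + m') j = m j + m' j := rfl

lemma ExcData.tzero_apply (j : Fin D.n) : (0 : D.TMod M) j = 0 := rfl

noncomputable instance : Module Γ (D.TMod M) where
  one_smul m := by
    funext j
    rw [ExcData.tsmul_def]
    simp only [one_mul, ExcData.c_gamma]
    rw [Finset.sum_eq_single j]
    · simp
    · intro k _ hk
      rw [Pi.single_eq_of_ne (Ne.symm hk), zero_smul]
    · simp
  mul_smul g h m := by
    funext j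
    simp only [ExcData.tsmul_def]
    have : ∀ k, D.c (g * h * D.γ k) j = ∑ l, D.c (g * D.γ l) j * D.c (h * D.γ k) l := by
      intro k
      rw [mul_assoc, D.c_mul g (h * D.γ k) j]
    simp only [this, Finset.sum_smul, mul_smul]
    rw [Finset.sum_comm]
    congr 1
    funext l
    rw [← Finset.smul_sum]
  smul_zero g := by
    funext j
    rw [ExcData.tsmul_def]
    simp only [ExcData.tzero_apply, smul_zero, Finset.sum_const_zero]
  smul_add g m m' := by
    funext j
    simp only [ExcData.tsmul_def, ExcData.tadd_apply, smul_add, Finset.sum_add_distrib]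
  add_smul g h m := by
    funext j
    simp only [ExcData.tsmul_def, ExcData.tadd_apply, add_mul, D.c_add, Pi.add_apply, add_smul,
      Finset.sum_add_distrib]
  zero_smul m := by
    funext j
    rw [ExcData.tsmul_def, ExcData.tzero_apply]
    simp [D.c_zero]

lemma ExcData.tsmul_apply (a : Λ) (m : D.TMod M) (j : Fin D.n) :
    (i a • m) j = D.sigma j a • m j := by
  rw [ExcData.tsmul_def]
  simp only [D.c_i_mul_gamma]
  rw [Finset.sum_eq_single j]
  · rw [Pi.single_eq_same]
  · intro k _ hk
    rw [Pi.single_eq_of_ne (Ne.symm hk), zero_smul]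
  · simp

end TMod

section TM

/-- the induced module as an object of `ModuleCat Γ` -/
noncomputable def ExcData.TM (M : ModuleCat.{u} Λ) : ModuleCat.{u} Γ :=
  ModuleCat.of Γ (D.TMod M)

/-- the induced map -/
noncomputable def ExcData.Tmap {M N : ModuleCat.{u} Λ} (f : M ⟶ N) : D.TM M ⟶ D.TM N := ModuleCat.ofHom {
  toFun m := (fun j => f (m j) : D.TMod N)
  map_add' m m' := by
    funext j
    show f ((m + m') j) = (fun j => f (m j) : D.TMod N) j + (fun j => f (m' j) : D.TMod N) j
    rw [ExcData.tadd_apply, map_add]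
  map_smul' g m := by
    funext j
    set m' : D.TMod N := fun j => f (m j) with hm'
    show f ((g • m) j) = (g • m') j
    rw [ExcData.tsmul_def, ExcData.tsmul_def, map_sum]
    simp [hm'] }

/-- the induction functor -/
noncomputable def ExcData.Tfunc : ModuleCat.{u} Λ ⥤ ModuleCat.{u} Γ where
  obj := D.TM
  map := D.Tmap
  map_id _ := rfl
  map_comp _ _ := rfl

attribute [reducible] ExcData.TM ExcData.Tfunc

instance : D.Tfunc.Additive where
  map_add := rfl

end TM

section Adj

lemma ExcData.tsum_apply {M : Type u} [AddCommGroup M] [Module Λ M] {α : Type*} (s : Finset α)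
    (v : α → D.TMod M) (j : Fin D.n) : (∑ k ∈ s, v k) j = ∑ k ∈ s, v k j :=
  show (∑ k ∈ s, (v k : Fin D.n → M)) j = ∑ k ∈ s, v k j from Finset.sum_apply j s v

/-- the unit of the adjunction, as a function -/
noncomputable def ExcData.unitFun (M : ModuleCat.{u} Λ) (m : M) : D.TMod M :=
  (fun k => D.c 1 k • m : D.TMod M)

lemma ExcData.unit_smul (M : ModuleCat.{u} Λ) (a : Λ) (m : M) :
    D.unitFun M (a • m) = i a • D.unitFun M m := by
  funext k
  show D.c 1 k • (a • m) = (i a • D.unitFun M m) k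
  rw [D.tsmul_apply]
  show D.c 1 k • a • m = D.sigma k a • D.c 1 k • m
  rw [← mul_smul, ← mul_smul]
  have h1 : D.c 1 k * a = D.c (i a) k := by rw [D.c_i]
  have h2 : D.sigma k a * D.c 1 k = D.c (i a) k := by rw [D.c_i']
  rw [h1, h2]

/-- the hom-equivalence of the induction–restriction adjunction -/
noncomputable def ExcData.homEquiv (M : ModuleCat.{u} Λ) (X : ModuleCat.{u} Γ) :
    (D.Tfunc.obj M ⟶ X) ≃ (M ⟶ (ModuleCat.restrictScalars i).obj X) where
  toFun φ := ModuleCat.ofHom (Y := (ModuleCat.restrictScalars i).obj X)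
    { toFun := fun m => φ (D.unitFun M m)
      map_add' := fun m m' => by
        show φ (D.unitFun M (m + m')) = φ (D.unitFun M m) + φ (D.unitFun M m')
        rw [← map_add]
        congr 1
        funext k
        show D.c 1 k • (m + m') = (D.unitFun M m + D.unitFun M m') k
        rw [D.tadd_apply]
        show _ = D.c 1 k • m + D.c 1 k • m'
        rw [smul_add]
      map_smul' := fun a m => by
        simp only [RingHom.id_apply]
        rw [D.unit_smul, map_smul]
        rfl }
  invFun ψ := ModuleCat.ofHom
    { toFun := fun m => ∑ k, D.γ k • ψ (m k)
      map_add' := fun m m' => by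
        simp only [D.tadd_apply, map_add, smul_add, Finset.sum_add_distrib]
        exact Finset.sum_add_distrib
      map_smul' := fun g m => by
        simp only [RingHom.id_apply]
        show ∑ k, D.γ k • ψ ((g • m) k) = g • ∑ k, D.γ k • ψ (m k)
        have e1 : ∀ k, ψ ((g • m) k) = ∑ l, D.c (g * D.γ l) k • ψ (m l) := by
          intro k
          rw [D.tsmul_def, map_sum]
          simp only [map_smul]
        have e2 : ∀ k, D.γ k • ψ ((g • m) k)
            = ∑ l, (D.γ k * i (D.c (g * D.γ l) k)) • (ψ (m l) : X) := by
          intro k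
          rw [e1 k, Finset.smul_sum]
          exact Finset.sum_congr rfl fun l _ =>
            (mul_smul (D.γ k) (i (D.c (g * D.γ l) k)) (ψ (m l) : X)).symm
        rw [Finset.sum_congr rfl fun k _ => e2 k, Finset.sum_comm]
        have e3 : ∀ l, ∑ k, (D.γ k * i (D.c (g * D.γ l) k)) • (ψ (m l) : X)
            = (g * D.γ l) • (ψ (m l) : X) := by
          intro l
          rw [← Finset.sum_smul, D.sum_c]
        rw [Finset.sum_congr rfl fun l _ => e3 l, Finset.smul_sum]
        exact Finset.sum_congr rfl fun l _ => mul_smul g (D.γ l) (ψ (m l) : X) }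
  left_inv φ := by
    apply ModuleCat.hom_ext; apply LinearMap.ext
    intro m
    show ∑ k, D.γ k • φ (D.unitFun M (m k)) = φ m
    have key : ∑ k, D.γ k • D.unitFun M (m k) = m := by
      funext j
      rw [D.tsum_apply]
      have h1 : ∀ k, (D.γ k • D.unitFun M (m k)) j = D.c (D.γ k) j • m k := by
        intro k
        rw [D.tsmul_def]
        have h0 : ∀ l, D.c (D.γ k * D.γ l) j • D.unitFun M (m k) l
            = (D.c (D.γ k * D.γ l) j * D.c 1 l) • m k := by
          intro l
          show D.c (D.γ k * D.γ l) j • (D.c 1 l • m k) = _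
          rw [mul_smul]
        simp only [h0]
        rw [← Finset.sum_smul, ← D.c_mul, mul_one]
      simp only [h1, D.c_gamma]
      rw [Finset.sum_eq_single j]
      · simp
      · intro k _ hk; rw [Pi.single_eq_of_ne (Ne.symm hk), zero_smul]
      · simp
    calc ∑ k, D.γ k • φ (D.unitFun M (m k))
        = ∑ k, φ (D.γ k • D.unitFun M (m k)) := by simp only [map_smul]
      _ = φ (∑ k, D.γ k • D.unitFun M (m k)) := by rw [map_sum]
      _ = φ m := by rw [key]
  right_inv ψ := by
    apply ModuleCat.hom_ext; apply LinearMap.ext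
    intro m
    show ∑ k, D.γ k • ψ (D.unitFun M m k) = ψ m
    have : ∀ k, D.γ k • (ψ (D.unitFun M m k) : X) = (D.γ k * i (D.c 1 k)) • ψ m := by
      intro k
      show D.γ k • (ψ (D.c 1 k • m) : X) = _
      rw [map_smul, mul_smul]
      rfl
    simp only [this]
    rw [← Finset.sum_smul, D.sum_c, one_smul]

end Adj

/-- the induction–restriction adjunction -/
noncomputable def ExcData.adj : D.Tfunc ⊣ ModuleCat.restrictScalars i :=
  Adjunction.mkOfHomEquiv
    { homEquiv := D.homEquiv
      homEquiv_naturality_left_symm := fun f g => by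
        apply ModuleCat.hom_ext; apply LinearMap.ext; intro m; rfl
      homEquiv_naturality_right := fun f g => by
        apply ModuleCat.hom_ext; apply LinearMap.ext; intro m; rfl }

section Kernels

variable {M N : ModuleCat.{u} Λ} (f : M ⟶ N)

noncomputable def ExcData.kernelLiftFun {W : ModuleCat.{u} Γ} (g' : W ⟶ D.TM M)
    (hg' : g' ≫ D.Tmap f = 0) (w : W) : D.TMod (ModuleCat.of Λ (LinearMap.ker f.hom)) :=
  fun j => ⟨g' w j, by
    have h0 : (g' ≫ D.Tmap f) w = 0 := by rw [hg']; rfl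
    have h1 : f (g' w j) = 0 := congrFun h0 j
    exact LinearMap.mem_ker.2 h1⟩

noncomputable def ExcData.kernelLift {W : ModuleCat.{u} Γ} (g' : W ⟶ D.TM M)
    (hg' : g' ≫ D.Tmap f = 0) : W ⟶ D.TM (ModuleCat.of Λ (LinearMap.ker f.hom)) := ModuleCat.ofHom {
  toFun := D.kernelLiftFun f g' hg'
  map_add' w w' := by
    funext j
    apply Subtype.ext
    exact (by rw [map_add]; rfl : g' (w + w') j = g' w j + g' w' j)
  map_smul' g w := by
    funext j
    apply Subtype.ext
    have h1 : g' (g • w) j = ∑ k, D.c (g * D.γ k) j • g' w k := by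
      rw [map_smul, D.tsmul_def]
    refine h1.trans ?_
    show ∑ k, D.c (g * D.γ k) j • g' w k
        = ((∑ k, D.c (g * D.γ k) j • D.kernelLiftFun f g' hg' w k : LinearMap.ker f.hom) : M)
    rw [Submodule.coe_sum]
    exact Finset.sum_congr rfl fun k _ => rfl }

noncomputable def ExcData.preservesKernel :
    PreservesLimit (parallelPair f 0) D.Tfunc := by
  have hw : ModuleCat.ofHom (LinearMap.ker f.hom).subtype ≫ f = 0 := by
    ext x
    exact x.2
  have lim2 : IsLimit (KernelFork.ofι
      (D.Tfunc.map (ModuleCat.ofHom (LinearMap.ker f.hom).subtype))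
      (by rw [← D.Tfunc.map_comp, hw, D.Tfunc.map_zero]) : Fork (D.Tfunc.map f) 0) := by
    refine KernelFork.IsLimit.ofι _ _ (fun {W'} g' hg' => D.kernelLift f g' hg') ?_ ?_
    · intro W' g' hg'
      apply ModuleCat.hom_ext; apply LinearMap.ext; intro w
      funext j
      rfl
    · intro W' g' hg' m hm
      apply ModuleCat.hom_ext; apply LinearMap.ext; intro w
      funext j
      apply Subtype.ext
      have h2 : (m ≫ D.Tfunc.map (ModuleCat.ofHom (LinearMap.ker f.hom).subtype)) w = g' w := by
        rw [hm]
      exact congrFun h2 j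
  exact preservesLimit_of_preserves_limit_cone (ModuleCat.kernelIsLimit f)
    ((isLimitMapConeForkEquiv' D.Tfunc hw).symm lim2)

end Kernels

noncomputable instance : PreservesColimitsOfSize.{0, 0} D.Tfunc :=
  D.adj.leftAdjoint_preservesColimits

instance : D.Tfunc.PreservesHomology where
  preservesKernels := fun {X Y} f => D.preservesKernel f
  preservesCokernels := fun {X Y} f => inferInstance

section Injectivity

/-- restriction along a ring isomorphism preserves injectivity -/
lemma injective_restrictScalars_of_ringEquiv {Λ₁ Λ₂ : Type u} [Ring Λ₁] [Ring Λ₂]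
    (e : Λ₁ ≃+* Λ₂) (M : ModuleCat.{u} Λ₂) (hM : Injective M) :
    Injective ((ModuleCat.restrictScalars (e : Λ₁ →+* Λ₂)).obj M) := by
  let F := ModuleCat.restrictScalars.{u} (e.symm : Λ₂ →+* Λ₁)
  let G := ModuleCat.restrictScalars.{u} (e : Λ₁ →+* Λ₂)
  have adj : F ⊣ G := Adjunction.mkOfHomEquiv
    { homEquiv := fun X Y =>
        { toFun := fun φ => ModuleCat.ofHom (Y := G.obj Y)
            { toFun := fun x => φ x
              map_add' := fun x x' => φ.hom.map_add x x'
              map_smul' := fun a x => by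
                simp only [RingHom.id_apply]
                have h1 : a • x = (e.symm (e a)) • x := by rw [RingEquiv.symm_apply_apply]
                show φ (a • x) = _
                rw [h1]
                exact φ.hom.map_smul (e a) x }
          invFun := fun ψ => ModuleCat.ofHom (X := F.obj X)
            { toFun := fun x => ψ x
              map_add' := fun x x' => ψ.hom.map_add x x'
              map_smul' := fun b x => by
                simp only [RingHom.id_apply]
                show ψ (e.symm b • x) = b • ψ x
                have h2 := ψ.hom.map_smul (e.symm b) x
                erw [h2]
                show e (e.symm b) • (ψ x : Y) = b • (ψ x : Y)
                rw [RingEquiv.apply_symm_apply] }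
          left_inv := fun φ => by apply ModuleCat.hom_ext; apply LinearMap.ext; intro x; rfl
          right_inv := fun ψ => by apply ModuleCat.hom_ext; apply LinearMap.ext; intro x; rfl }
      homEquiv_naturality_left_symm := fun f g => by apply ModuleCat.hom_ext; apply LinearMap.ext; intro x; rfl
      homEquiv_naturality_right := fun f g => by apply ModuleCat.hom_ext; apply LinearMap.ext; intro x; rfl }
  exact adj.map_injective M hM

/-- the restriction of the induced module of an injective module is injective -/
lemma ExcData.injective_resTM (M : ModuleCat.{u} Λ) (hM : Injective M) :
    Injective ((ModuleCat.restrictScalars i).obj (D.TM M)) := by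
  have hσ : ∀ j : Fin D.n, Injective ((ModuleCat.restrictScalars (D.σ j)).obj M) := by
    intro j
    exact injective_restrictScalars_of_ringEquiv
      (RingEquiv.ofBijective (D.σ j) ⟨D.sigma_injective j, D.sigma_surjective j⟩) M hM
  constructor
  intro A B g f hf
  let projSL : ∀ j : Fin D.n,
      ((ModuleCat.restrictScalars i).obj (D.TM M)) →ₛₗ[D.σ j] M := fun j =>
    { toFun := fun w => w j
      map_add' := fun w w' => D.tadd_apply M w w' j
      map_smul' := fun a w => D.tsmul_apply M a w j }
  let proj : ∀ j : Fin D.n,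
      (ModuleCat.restrictScalars i).obj (D.TM M) ⟶
        (ModuleCat.restrictScalars (D.σ j)).obj M :=
    fun j => ModuleCat.semilinearMapAddEquiv (D.σ j) _ M (projSL j)
  haveI := fun j => hσ j
  let ψ : ∀ j : Fin D.n, B ⟶ (ModuleCat.restrictScalars (D.σ j)).obj M :=
    fun j => Injective.factorThru (g ≫ proj j) f
  let ψs : ∀ j : Fin D.n, B →ₛₗ[D.σ j] M :=
    fun j => (ModuleCat.semilinearMapAddEquiv (D.σ j) B M).symm (ψ j)
  let hfun : B → D.TMod M := fun b j => ψs j b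
  refine ⟨ModuleCat.ofHom (Y := (ModuleCat.restrictScalars i).obj (D.TM M)) <|
          { toFun := hfun
            map_add' := fun b b' => by
              funext j
              show ψs j (b + b') = hfun b j + hfun b' j
              rw [map_add]
            map_smul' := fun a b => by
              funext j
              show ψs j (a • b) = (i a • hfun b) j
              rw [D.tsmul_apply]
              exact (ψs j).map_smulₛₗ a b }, ?_⟩
  apply ModuleCat.hom_ext; apply LinearMap.ext
  intro x
  funext j
  have h3 : f ≫ ψ j = g ≫ proj j := Injective.comp_factorThru (g ≫ proj j) f
  have h4 : ψ j (f x) = (g ≫ proj j) x := by rw [← h3]; rfl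
  exact h4

/-- a `Γ`-module whose restriction is injective is itself injective,
by right `Λ`-projectivity -/
lemma injective_of_injective_restrict (hRP : RingHom.IsRightProjectiveExt i) (Nc : ModuleCat.{u} Γ)
    (hres : Injective ((ModuleCat.restrictScalars i).obj Nc)) : Injective Nc := by
  let E : ModuleCat.{u} Γ := Injective.under Nc
  let f : Nc ⟶ E := Injective.ι Nc
  haveI : Mono f := inferInstance
  have hfinj : Function.Injective f := (ModuleCat.mono_iff_injective f).1 inferInstance
  let N' : Submodule Γ E := LinearMap.range f.hom
  let eLin : Nc ≃ₗ[Γ] N' := LinearEquiv.ofInjective f.hom hfinj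
  let eIso : Nc ≅ ModuleCat.of Γ N' := eLin.toModuleIso
  let sub : ModuleCat.of Γ N' ⟶ E := ModuleCat.ofHom N'.subtype
  have hsub : eIso.hom ≫ sub = f := by
    apply ModuleCat.hom_ext; apply LinearMap.ext; intro x; rfl
  have hsub' : sub = eIso.inv ≫ f := by
    rw [← hsub, ← Category.assoc, Iso.inv_hom_id, Category.id_comp]
  haveI : Mono ((ModuleCat.restrictScalars i).map f) := inferInstance
  let r0 : (ModuleCat.restrictScalars i).obj E ⟶ (ModuleCat.restrictScalars i).obj Nc :=
    Injective.factorThru (𝟙 _) ((ModuleCat.restrictScalars i).map f)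
  have hr0 : (ModuleCat.restrictScalars i).map f ≫ r0 = 𝟙 _ :=
    Injective.comp_factorThru _ _
  have hsplit : IsSplitMono ((ModuleCat.restrictScalars i).map (ModuleCat.ofHom N'.subtype)) := by
    refine ⟨⟨⟨r0 ≫ (ModuleCat.restrictScalars i).map eIso.hom, ?_⟩⟩⟩
    have : (ModuleCat.restrictScalars i).map (ModuleCat.ofHom N'.subtype)
        = (ModuleCat.restrictScalars i).map eIso.inv ≫ (ModuleCat.restrictScalars i).map f := by
      rw [← Functor.map_comp, ← hsub']; rfl
    rw [this, Category.assoc, ← Category.assoc ((ModuleCat.restrictScalars i).map f), hr0,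
      Category.id_comp, ← Functor.map_comp, Iso.inv_hom_id]
    exact (ModuleCat.restrictScalars i).map_id _
  have hsplitΓ : IsSplitMono (ModuleCat.ofHom N'.subtype) := hRP E N' hsplit
  let r : E ⟶ Nc := hsplitΓ.exists_splitMono.some.retraction ≫ eIso.inv
  have hfr : f ≫ r = 𝟙 Nc := by
    show f ≫ hsplitΓ.exists_splitMono.some.retraction ≫ eIso.inv = 𝟙 Nc
    rw [← hsub, Category.assoc, ← Category.assoc sub,
      (show sub ≫ hsplitΓ.exists_splitMono.some.retraction = 𝟙 _ from
        hsplitΓ.exists_splitMono.some.id), Category.id_comp,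
      Iso.hom_inv_id]
  constructor
  intro A B g m hm
  refine ⟨Injective.factorThru (g ≫ f) m ≫ r, ?_⟩
  rw [← Category.assoc, Injective.comp_factorThru, Category.assoc, hfr, Category.comp_id]

end Injectivity

section PD

variable {R : Type u} [Ring R]

lemma projective_zero : Projective (0 : ModuleCat.{u} R) := by
  constructor
  intro E X f e he
  exact ⟨0, (Limits.isZero_zero _).eq_of_src _ _⟩

lemma hasProjDimLE_of_iso : ∀ (m : ℕ) {M N : ModuleCat.{u} R} (_ : M ≅ N),
    HasProjDimLE R m M → HasProjDimLE R m N := by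
  intro m
  induction m with
  | zero => intro M N e h; exact Projective.of_iso e h
  | succ m ih =>
    intro M N e h
    obtain ⟨P, f, hP, hf, hk⟩ := h
    haveI := hf
    refine ⟨P, f ≫ e.hom, hP, inferInstance, ?_⟩
    exact ih ((kernelCompMono f e.hom).symm) hk

lemma hasProjDimLE_succ : ∀ (m : ℕ) {M : ModuleCat.{u} R},
    HasProjDimLE R m M → HasProjDimLE R (m + 1) M := by
  intro m
  induction m with
  | zero =>
    intro M h
    refine ⟨M, 𝟙 M, h, inferInstance, ?_⟩
    exact Projective.of_iso (kernel.ofMono (𝟙 M)).symm projective_zero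
  | succ m ih =>
    intro M h
    obtain ⟨P, f, hP, hf, hk⟩ := h
    exact ⟨P, f, hP, hf, ih hk⟩

lemma hasProjDimLE_mono {m m' : ℕ} (h : m ≤ m') {M : ModuleCat.{u} R} :
    HasProjDimLE R m M → HasProjDimLE R m' M := by
  induction h with
  | refl => exact id
  | step _ ih => exact fun hm => hasProjDimLE_succ _ (ih hm)

end PD

section PDT

lemma ExcData.projective_TM {M : ModuleCat.{u} Λ} (hM : Projective M) :
    Projective (D.Tfunc.obj M) := by
  constructor
  intro E X gg e he
  have hsur : Function.Surjective e := (ModuleCat.epi_iff_surjective e).1 he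
  haveI : Epi ((ModuleCat.restrictScalars i).map e) :=
    (ModuleCat.epi_iff_surjective _).2 hsur
  haveI := hM
  let ψ : M ⟶ (ModuleCat.restrictScalars i).obj E :=
    Projective.factorThru (D.homEquiv M X gg) ((ModuleCat.restrictScalars i).map e)
  refine ⟨(D.homEquiv M E).symm ψ, ?_⟩
  have key : (D.homEquiv M E).symm ψ ≫ e
      = (D.homEquiv M X).symm (ψ ≫ (ModuleCat.restrictScalars i).map e) := by
    apply ModuleCat.hom_ext; apply LinearMap.ext
    intro mm
    show e (∑ k, D.γ k • ψ (mm k)) = ∑ k, D.γ k • e (ψ (mm k))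
    erw [map_sum]
    exact Finset.sum_congr rfl fun k _ => e.hom.map_smul (D.γ k) (ψ (mm k))
  rw [key, Projective.factorThru_comp, Equiv.symm_apply_apply]

lemma ExcData.epi_Tmap {M N : ModuleCat.{u} Λ} (f : M ⟶ N) (hf : Epi f) :
    Epi (D.Tfunc.map f) := by
  rw [ModuleCat.epi_iff_surjective]
  have hs : Function.Surjective f := (ModuleCat.epi_iff_surjective f).1 hf
  intro y
  refine ⟨(fun j => Classical.choose (hs (y j)) : D.TMod M), ?_⟩
  funext j
  exact Classical.choose_spec (hs (y j))

lemma ExcData.pd_T : ∀ (m : ℕ) {M : ModuleCat.{u} Λ},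
    HasProjDimLE Λ m M → HasProjDimLE Γ m (D.Tfunc.obj M) := by
  intro m
  induction m with
  | zero => intro M h; exact D.projective_TM h
  | succ m ih =>
    intro M h
    obtain ⟨P, f, hP, hf, hk⟩ := h
    haveI : PreservesLimit (parallelPair f 0) D.Tfunc := D.preservesKernel f
    refine ⟨D.Tfunc.obj P, D.Tfunc.map f, D.projective_TM hP, D.epi_Tmap f hf, ?_⟩
    exact hasProjDimLE_of_iso m (PreservesKernel.iso D.Tfunc f) (ih hk)

end PDT

section TIso

/-- `T Λ ≅ Γ` -/
noncomputable def ExcData.TLamIso : D.Tfunc.obj (ModuleCat.of Λ Λ) ≅ ModuleCat.of Γ Γ := by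
  refine LinearEquiv.toModuleIso (LinearEquiv.ofBijective ?_ ?_)
  · refine
      { toFun := fun m => ∑ k, D.γ k * i (m k)
        map_add' := fun m m' => ?_
        map_smul' := fun g m => ?_ }
    · show ∑ k, D.γ k * i ((m + m') k) = _
      simp only [D.tadd_apply, map_add, mul_add, Finset.sum_add_distrib]
    · simp only [RingHom.id_apply]
      show ∑ j, D.γ j * i ((g • m) j) = g * ∑ k, D.γ k * i (m k)
      have e1 : ∀ j, D.γ j * i ((g • m) j)
          = ∑ k, (D.γ j * i (D.c (g * D.γ k) j)) * i (m k) := by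
        intro j
        rw [D.tsmul_def, map_sum, Finset.mul_sum]
        refine Finset.sum_congr rfl fun k _ => ?_
        show D.γ j * i (D.c (g * D.γ k) j • m k) = _
        rw [smul_eq_mul, map_mul, mul_assoc]
      rw [Finset.sum_congr rfl fun j _ => e1 j, Finset.sum_comm, Finset.mul_sum]
      refine Finset.sum_congr rfl fun k _ => ?_
      rw [← Finset.sum_mul, D.sum_c, mul_assoc]
  · exact D.hR

end TIso

lemma projDim_le_of {R : Type u} [Ring R] {m : ℕ} {M : ModuleCat.{u} R}
    (h : HasProjDimLE R m M) : projDim R M ≤ (m : ℕ∞) :=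
  sInf_le ⟨m, rfl, h⟩

lemma hasProjDimLE_of_projDim_le {R : Type u} [Ring R] {m : ℕ} {M : ModuleCat.{u} R}
    (h : projDim R M ≤ (m : ℕ∞)) : HasProjDimLE R m M := by
  set S : Set ℕ∞ := {d : ℕ∞ | ∃ n : ℕ, d = n ∧ HasProjDimLE R n M} with hS
  have hne : S.Nonempty := by
    by_contra hne
    rw [Set.not_nonempty_iff_eq_empty] at hne
    rw [projDim, ← hS, hne, sInf_empty] at h
    exact ENat.coe_ne_top m (top_le_iff.1 h)
  obtain ⟨n', hn', hle'⟩ := csInf_mem hne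
  have h2 : (n' : ℕ∞) ≤ (m : ℕ∞) := by
    rw [← hn']
    exact h
  exact hasProjDimLE_mono (Nat.cast_le.1 h2) hle'

end ExcProofAux



/-- Let `Γ` be an excellent extension of an Artin algebra `Λ`. If `Λ` admits an injective
resolution `0 → Λ → I⁰ → I¹ → ⋯` as a left `Λ`-module with `pd_Λ I^n ≤ n` for all `n ≥ 0`,
then `Γ` admits an injective resolution `0 → Γ → J⁰ → J¹ → ⋯` as a left `Γ`-module with
`pd_Γ J^n ≤ n` for all `n ≥ 0`. -/
theorem exists_injectiveResolution_of_isExcellentExtension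
    (R : Type u) [CommRing R] [IsArtinianRing R] [Algebra R Λ] [Module.Finite R Λ]
    (i : Λ →+* Γ) (hexc : i.IsExcellentExtension)
    (h : ∃ I : InjectiveResolution (ModuleCat.of Λ Λ),
      ∀ n : ℕ, projDim Λ (I.cocomplex.X n) ≤ (n : ℕ∞)) :
    ∃ J : InjectiveResolution (ModuleCat.of Γ Γ),
      ∀ n : ℕ, projDim Γ (J.cocomplex.X n) ≤ (n : ℕ∞) := by
  classical
  obtain ⟨I, hI⟩ := h
  obtain ⟨n, γ, hLbij, hRbij, hcomm⟩ := hexc.free_common_basis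
  let D : ExcProofAux.ExcData i := ⟨n, γ, hRbij, hLbij.1, hcomm⟩
  let F := D.Tfunc
  let cpx := (F.mapHomologicalComplex (ComplexShape.up ℕ)).obj I.cocomplex
  have hinj : ∀ m : ℕ, Injective (cpx.X m) := fun m =>
    ExcProofAux.injective_of_injective_restrict hexc.rightProjective
      (D.Tfunc.obj (I.cocomplex.X m)) (D.injective_resTM _ (I.injective m))
  let ι : (CochainComplex.single₀ (ModuleCat.{u} Γ)).obj (ModuleCat.of Γ Γ) ⟶ cpx :=
    (CochainComplex.single₀ (ModuleCat.{u} Γ)).map D.TLamIso.inv ≫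
      (HomologicalComplex.singleMapHomologicalComplex F (ComplexShape.up ℕ) 0).inv.app
        (ModuleCat.of Λ Λ) ≫
      (F.mapHomologicalComplex (ComplexShape.up ℕ)).map I.ι
  haveI : QuasiIso ((CochainComplex.single₀ (ModuleCat.{u} Γ)).map D.TLamIso.inv) :=
    ⟨fun _ => inferInstance⟩
  haveI : QuasiIso ((HomologicalComplex.singleMapHomologicalComplex F
      (ComplexShape.up ℕ) 0).inv.app (ModuleCat.of Λ Λ)) := ⟨fun _ => inferInstance⟩
  haveI : QuasiIso ((F.mapHomologicalComplex (ComplexShape.up ℕ)).map I.ι) := inferInstance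
  haveI : QuasiIso ι := inferInstance
  refine ⟨⟨cpx, hinj, ι, inferInstance⟩, ?_⟩
  intro m
  exact ExcProofAux.projDim_le_of
    (D.pd_T m (ExcProofAux.hasProjDimLE_of_projDim_le (hI m)))
end

section
/- Let Λ be an Artin algebra, G a finite group of order n acting on Λ by ring automorphisms with n invertible in Λ, and Γ = ΛG the skew group algebra. Let M and N be finitely generated left Λ-modules with N G-stable. Then there is an isomorphism of abelian groups Hom_Γ(F M, F N) ≅ (Hom_Λ(M, N))^n, where F = Γ ⊗_Λ −. -/
open CategoryTheory Limits DirectSum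

universe u

variable {Λ Γ G : Type u} [Ring Λ] [Ring Γ] [Group G] [Fintype G]

/-- The twisted module `{}^σM`: same underlying abelian group as `M`, with the `Λ`-action
`λ · x = σ⁻¹(λ)x`; that is, restriction of scalars along the automorphism `σ⁻¹`. -/
noncomputable def twistModule (φ : G →* RingAut Λ) (σ : G) (M : ModuleCat.{u} Λ) :
    ModuleCat.{u} Λ :=
  (ModuleCat.restrictScalars ((φ σ)⁻¹ : RingAut Λ).toRingHom).obj M

/-- A left `Λ`-module `N` is `G`-stable if `{}^σN ≅ N` for every `σ ∈ G`. -/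
def IsGStable (φ : G →* RingAut Λ) (N : ModuleCat.{u} Λ) : Prop :=
  ∀ σ : G, Nonempty (twistModule φ σ N ≅ N)

namespace SkewAux

variable (φ : G →* RingAut Λ) (i : Λ →+* Γ) (g : G →* Γˣ)

lemma aut_mul_apply (σ τ : G) (x : Λ) : φ (σ * τ) x = φ σ (φ τ x) := by
  rw [map_mul]; rfl

lemma aut_apply_inv (σ : G) (x : Λ) : φ σ (φ σ⁻¹ x) = x := by
  rw [← aut_mul_apply, mul_inv_cancel]
  simp only [map_one]
  rfl

/-- The sum map `(G → Λ) → Γ`, `c ↦ ∑ i (c σ) g σ`. -/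
def E (c : G → Λ) : Γ := ∑ σ : G, i (c σ) * (g σ : Γ)

lemma E_add (a b : G → Λ) : E i g (a + b) = E i g a + E i g b := by
  simp [E, map_add, add_mul, Finset.sum_add_distrib]

/-- The sum map as an additive monoid hom. -/
def Ehom : (G → Λ) →+ Γ where
  toFun := E i g
  map_zero' := by simp [E]
  map_add' := E_add i g

variable {φ i g}

/-- The sum map as an additive equivalence, given the freeness assumption. -/
noncomputable def EE (h : IsSkewGroupAlgebra φ i g) : (G → Λ) ≃+ Γ :=
  AddEquiv.ofBijective (Ehom i g) h.free

lemma EE_apply (h : IsSkewGroupAlgebra φ i g) (c : G → Λ) : EE h c = E i g c := rfl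

variable (φ) in
/-- Multiplication of coordinate functions corresponding to multiplication in `Γ`. -/
def mulFun (a b : G → Λ) : G → Λ := fun ρ => ∑ τ : G, a τ * φ τ (b (τ⁻¹ * ρ))

lemma E_mul (h : IsSkewGroupAlgebra φ i g) (a b : G → Λ) :
    E i g (mulFun φ a b) = E i g a * E i g b := by
  have key : ∀ σ τ : G, (i (a σ) * (g σ : Γ)) * (i (b τ) * (g τ : Γ))
      = i (a σ * φ σ (b τ)) * (g (σ * τ) : Γ) := by
    intro σ τ
    rw [map_mul i, map_mul g, Units.val_mul]
    calc i (a σ) * (g σ : Γ) * (i (b τ) * (g τ : Γ))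
        = i (a σ) * ((g σ : Γ) * i (b τ)) * (g τ : Γ) := by
          rw [mul_assoc (i (a σ)) ((g σ : Γ)) _, ← mul_assoc ((g σ : Γ)) (i (b τ)) _,
            ← mul_assoc]
      _ = i (a σ) * (i (φ σ (b τ)) * (g σ : Γ)) * (g τ : Γ) := by rw [h.comm]
      _ = i (a σ) * i (φ σ (b τ)) * ((g σ : Γ) * (g τ : Γ)) := by
          rw [← mul_assoc (i (a σ)) (i (φ σ (b τ))) _, mul_assoc]
  rw [show E i g a * E i g b
      = ∑ σ : G, ∑ τ : G, (i (a σ) * (g σ : Γ)) * (i (b τ) * (g τ : Γ)) from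
    Finset.sum_mul_sum _ _ _ _]
  simp_rw [key]
  have re : ∀ σ : G, (∑ τ : G, i (a σ * φ σ (b τ)) * (g (σ * τ) : Γ))
      = ∑ ρ : G, i (a σ * φ σ (b (σ⁻¹ * ρ))) * (g ρ : Γ) := fun σ =>
    Fintype.sum_equiv (Equiv.mulLeft σ) _ _ (fun τ => by simp)
  simp_rw [re]
  rw [Finset.sum_comm]
  refine Finset.sum_congr rfl fun ρ _ => ?_
  simp [E, mulFun, map_sum, Finset.sum_mul]

lemma co_i (h : IsSkewGroupAlgebra φ i g) [DecidableEq G] (a : Λ) :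
    (EE h).symm (i a) = fun τ => if τ = 1 then a else 0 := by
  rw [AddEquiv.symm_apply_eq, EE_apply, E]
  have : ∀ τ : G, i (if τ = 1 then a else 0) * (g τ : Γ)
      = if τ = 1 then i a * (g (1 : G) : Γ) else 0 := fun τ => by
    split_ifs with hτ
    · subst hτ; rfl
    · simp
  simp_rw [this]
  rw [Finset.sum_ite_eq' Finset.univ (1 : G)]
  simp

lemma co_unit (h : IsSkewGroupAlgebra φ i g) [DecidableEq G] (σ₀ : G) :
    (EE h).symm ((g σ₀ : Γ)) = fun τ => if τ = σ₀ then (1 : Λ) else 0 := by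
  rw [AddEquiv.symm_apply_eq, EE_apply, E]
  have : ∀ τ : G, i (if τ = σ₀ then (1 : Λ) else 0) * (g τ : Γ)
      = if τ = σ₀ then (g σ₀ : Γ) else 0 := fun τ => by
    split_ifs with hτ
    · subst hτ; simp
    · simp
  simp_rw [this]
  rw [Finset.sum_ite_eq' Finset.univ σ₀]
  simp

lemma co_one (h : IsSkewGroupAlgebra φ i g) [DecidableEq G] :
    (EE h).symm (1 : Γ) = fun τ => if τ = 1 then (1 : Λ) else 0 := by
  have := co_i h (a := (1 : Λ))
  rwa [map_one] at this

lemma co_mul (h : IsSkewGroupAlgebra φ i g) (x y : Γ) :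
    (EE h).symm (x * y) = mulFun φ ((EE h).symm x) ((EE h).symm y) := by
  rw [AddEquiv.symm_apply_eq, EE_apply, E_mul h, ← EE_apply h, ← EE_apply h,
    AddEquiv.apply_symm_apply, AddEquiv.apply_symm_apply]

section IndSMul

variable {V : Type u} [AddCommGroup V] [Module Λ V]

variable (φ) in
/-- The action of `Γ` (via coordinates) on `G → V`, modelling `Γ ⊗ V`. -/
def indSMul (a : G → Λ) (c : G → V) : G → V :=
  fun σ => ∑ τ : G, (φ σ⁻¹ (a τ)) • c (τ⁻¹ * σ)

lemma indSMul_add (a : G → Λ) (c d : G → V) :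
    indSMul φ a (c + d) = indSMul φ a c + indSMul φ a d := by
  funext σ; simp [indSMul, smul_add, Finset.sum_add_distrib]

lemma indSMul_zero (a : G → Λ) : indSMul φ a (0 : G → V) = 0 := by
  funext σ; simp [indSMul]

lemma indSMul_add_left (a b : G → Λ) (c : G → V) :
    indSMul φ (a + b) c = indSMul φ a c + indSMul φ b c := by
  funext σ; simp [indSMul, map_add, add_smul, Finset.sum_add_distrib]

lemma indSMul_zero_left (c : G → V) : indSMul φ (0 : G → Λ) c = 0 := by
  funext σ; simp [indSMul]

lemma indSMul_i [DecidableEq G] (a : Λ) (c : G → V) :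
    indSMul φ (fun τ => if τ = 1 then a else 0) c = fun σ => (φ σ⁻¹ a) • c σ := by
  funext σ
  have : ∀ τ : G, (φ σ⁻¹ (if τ = 1 then a else 0)) • c (τ⁻¹ * σ)
      = if τ = 1 then (φ σ⁻¹ a) • c σ else 0 := fun τ => by
    split_ifs with hτ
    · subst hτ; simp
    · simp
  rw [indSMul]
  simp_rw [this]
  rw [Finset.sum_ite_eq' Finset.univ (1 : G)]
  simp

lemma indSMul_one [DecidableEq G] (c : G → V) :
    indSMul φ (fun τ => if τ = 1 then (1 : Λ) else 0) c = c := by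
  rw [indSMul_i]
  funext σ; simp

lemma indSMul_single [DecidableEq G] (σ₀ : G) (x : V) :
    indSMul φ (fun τ => if τ = σ₀ then (1 : Λ) else 0)
      (fun τ => if τ = 1 then x else 0) = fun τ => if τ = σ₀ then x else 0 := by
  funext σ
  have : ∀ τ : G, (φ σ⁻¹ (if τ = σ₀ then (1 : Λ) else 0))
        • (if τ⁻¹ * σ = 1 then x else 0)
      = if τ = σ₀ then (if σ = σ₀ then x else 0) else 0 := fun τ => by
    by_cases h1 : τ = σ₀
    · subst h1
      by_cases h2 : σ = τ
      · subst h2; simp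
      · have hne : ¬ (τ⁻¹ * σ = 1) := by
          intro hc
          exact h2 (by rwa [inv_mul_eq_one, eq_comm] at hc)
        simp [hne, h2]
    · simp [h1]
  rw [indSMul]
  simp_rw [this]
  rw [Finset.sum_ite_eq' Finset.univ σ₀]
  simp

lemma indSMul_mul (a b : G → Λ) (c : G → V) :
    indSMul φ (mulFun φ a b) c = indSMul φ a (indSMul φ b c) := by
  funext σ
  show (∑ ρ : G, (φ σ⁻¹ (∑ τ : G, a τ * φ τ (b (τ⁻¹ * ρ)))) • c (ρ⁻¹ * σ))
      = ∑ τ : G, (φ σ⁻¹ (a τ)) • ∑ μ : G, (φ (τ⁻¹ * σ)⁻¹ (b μ)) • c (μ⁻¹ * (τ⁻¹ * σ))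
  simp_rw [map_sum, map_mul, Finset.sum_smul, mul_smul, Finset.smul_sum]
  rw [Finset.sum_comm]
  refine Finset.sum_congr rfl fun τ _ => ?_
  refine Fintype.sum_equiv (Equiv.mulLeft τ⁻¹) _ _ fun ρ => ?_
  have h1 : φ σ⁻¹ (φ τ (b (τ⁻¹ * ρ))) = φ (τ⁻¹ * σ)⁻¹ (b (τ⁻¹ * ρ)) := by
    rw [mul_inv_rev, inv_inv, ← aut_mul_apply]
  have h2 : (τ⁻¹ * ρ)⁻¹ * (τ⁻¹ * σ) = ρ⁻¹ * σ := by group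
  simp only [Equiv.coe_mulLeft, h1, h2]

end IndSMul

/-- The `Γ`-module structure on `G → V` modelling the induced module `Γ ⊗_Λ V`. -/
noncomputable def indModule (h : IsSkewGroupAlgebra φ i g) (V : Type u) [AddCommGroup V]
    [Module Λ V] : Module Γ (G → V) := by
  classical
  exact
  { smul := fun γ c => indSMul φ ((EE h).symm γ) c
    one_smul := fun c => by
      show indSMul φ ((EE h).symm 1) c = c
      rw [co_one h, indSMul_one]
    mul_smul := fun x y c => by
      show indSMul φ ((EE h).symm (x * y)) c
        = indSMul φ ((EE h).symm x) (indSMul φ ((EE h).symm y) c)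
      rw [co_mul h, indSMul_mul]
    smul_zero := fun x => indSMul_zero _
    smul_add := fun x c d => indSMul_add _ _ _
    add_smul := fun x y c => by
      show indSMul φ ((EE h).symm (x + y)) c = _
      rw [map_add, indSMul_add_left]
      rfl
    zero_smul := fun c => by
      show indSMul φ ((EE h).symm 0) c = 0
      rw [map_zero, indSMul_zero_left] }

/-- The induced module as an object of `ModuleCat Γ`. -/
noncomputable def Ind (h : IsSkewGroupAlgebra φ i g) (N : ModuleCat.{u} Λ) :
    ModuleCat.{u} Γ :=
  letI := indModule h N
  ModuleCat.of Γ (G → N)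

lemma Ind_smul_def (h : IsSkewGroupAlgebra φ i g) (N : ModuleCat.{u} Λ) (γ : Γ)
    (c : Ind h N) : γ • c = indSMul φ ((EE h).symm γ) c := rfl

lemma res_Ind_smul (h : IsSkewGroupAlgebra φ i g) (N : ModuleCat.{u} Λ) (a : Λ)
    (c : (ModuleCat.restrictScalars i).obj (Ind h N)) (σ : G) :
    (a • c) σ = (φ σ⁻¹ a) • (c σ : N) := by
  classical
  have : (a • c) = indSMul φ ((EE h).symm (i a)) c := rfl
  rw [this, co_i h]
  exact congrFun (indSMul_i (V := (N : Type u)) a c) σ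

variable (φ) in
/-- Identity map from the twisted module carrier to the plain carrier. -/
def untwist (σ : G) (N : ModuleCat.{u} Λ) : twistModule φ σ N → N := fun y => y

variable (φ) in
/-- Identity map from the plain carrier to the twisted module carrier. -/
def totwist (σ : G) (N : ModuleCat.{u} Λ) : N → twistModule φ σ N := fun y => y

lemma twist_smul (σ : G) (N : ModuleCat.{u} Λ) (a : Λ) (y : twistModule φ σ N) :
    untwist φ σ N (a • y) = φ σ⁻¹ a • untwist φ σ N y := by
  have h0 : (a • y : twistModule φ σ N)
      = (((φ σ)⁻¹ : RingAut Λ).toRingHom a) • untwist φ σ N y := rfl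
  rw [show untwist φ σ N (a • y) = (a • y : twistModule φ σ N) from rfl, h0, map_inv]
  rfl

lemma smul_totwist (σ : G) (N : ModuleCat.{u} Λ) (a : Λ) (z : N) :
    (a • totwist φ σ N z : twistModule φ σ N) = totwist φ σ N (φ σ⁻¹ a • z) := by
  have h0 : (a • totwist φ σ N z : twistModule φ σ N)
      = totwist φ σ N ((((φ σ)⁻¹ : RingAut Λ).toRingHom a) • z) := rfl
  rw [h0, map_inv]
  rfl

/-- The `σ`-component projection `res (Ind N) ⟶ {}^σ N` as a `Λ`-linear map. -/
noncomputable def proj (h : IsSkewGroupAlgebra φ i g) (N : ModuleCat.{u} Λ) (σ : G) :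
    (ModuleCat.restrictScalars i).obj (Ind h N) ⟶ twistModule φ σ N :=
    ModuleCat.ofHom (X := (ModuleCat.restrictScalars i).obj (Ind h N))
      (Y := twistModule φ σ N) {
  toFun := fun c => totwist φ σ N ((c : G → N) σ)
  map_add' := fun c d => rfl
  map_smul' := fun a c => by
    show totwist φ σ N ((a • c) σ) = a • totwist φ σ N ((c : G → N) σ)
    rw [res_Ind_smul h N a c σ, smul_totwist] }

/-- Assembling maps into the twisted components into a map into `res (Ind N)`. -/
noncomputable def intoInd (h : IsSkewGroupAlgebra φ i g) {M N : ModuleCat.{u} Λ}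
    (w : ∀ σ : G, M ⟶ twistModule φ σ N) :
    M ⟶ (ModuleCat.restrictScalars i).obj (Ind h N) :=
    ModuleCat.ofHom (Y := (ModuleCat.restrictScalars i).obj (Ind h N)) {
  toFun := fun x => (fun σ => untwist φ σ N (w σ x) : G → N)
  map_add' := fun x y => by
    funext σ
    show untwist φ σ N ((w σ) (x + y))
      = untwist φ σ N ((w σ) x) + untwist φ σ N ((w σ) y)
    rw [map_add (w σ).hom]
    rfl
  map_smul' := fun a x => by
    funext σ
    have key : untwist φ σ N ((w σ) (a • x)) = φ σ⁻¹ a • untwist φ σ N ((w σ) x) := by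
      rw [map_smul (w σ).hom a x, twist_smul]
    exact key.trans (res_Ind_smul h N a (fun σ' => untwist φ σ' N ((w σ') x)) σ).symm }

open scoped Classical in
/-- The unit-like map `N ⟶ res (Ind N)`, `x ↦ δ₁ x`. -/
noncomputable def eta (h : IsSkewGroupAlgebra φ i g) (N : ModuleCat.{u} Λ) :
    N ⟶ (ModuleCat.restrictScalars i).obj (Ind h N) :=
  ModuleCat.ofHom (Y := (ModuleCat.restrictScalars i).obj (Ind h N)) <|
  { toFun := fun x => (fun σ => if σ = 1 then x else 0 : G → N)
    map_add' := fun x y => by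
      funext σ
      show (if σ = 1 then x + y else 0 : N)
        = (if σ = 1 then x else 0 : N) + (if σ = 1 then y else 0 : N)
      split_ifs with hσ <;> simp
    map_smul' := fun a x => by
      show (fun σ => if σ = 1 then a • x else 0 : G → N)
        = indSMul φ ((EE h).symm (i a)) (fun σ => if σ = 1 then x else 0)
      rw [co_i h, indSMul_i]
      funext σ
      split_ifs with hσ
      · subst hσ; rw [inv_one, map_one]; rfl
      · simp }

open scoped Classical in
lemma eta_apply (h : IsSkewGroupAlgebra φ i g) (N : ModuleCat.{u} Λ)
    (x : N) (σ : G) : eta h N x σ = if σ = 1 then x else 0 := rfl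

/-- The inverse of adjoint transposition: from `u : N ⟶ res Y` produce a `Γ`-map
`Ind N ⟶ Y`. -/
noncomputable def Psi (h : IsSkewGroupAlgebra φ i g) {N : ModuleCat.{u} Λ}
    {Y : ModuleCat.{u} Γ} (u : N ⟶ (ModuleCat.restrictScalars i).obj Y) :
    Ind h N ⟶ Y := by
  classical
  exact ModuleCat.ofHom (X := Ind h N) <|
  { toFun := fun c => ∑ σ : G, ((g σ : Γ) • u (c σ) : Y)
    map_add' := fun c d => by
      show (∑ σ : G, ((g σ : Γ) • u ((c + d) σ) : Y)) = _
      have : ∀ σ : G, (c + d) σ = c σ + d σ := fun _ => rfl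
      simp only [this, map_add, smul_add, Finset.sum_add_distrib]
      rfl
    map_smul' := fun γ c => by
      show (∑ σ : G, ((g σ : Γ) • u ((γ • c) σ) : Y)) = γ • ∑ σ : G, ((g σ : Γ) • u (c σ) : Y)
      have hc : (γ • c) = indSMul φ ((EE h).symm γ) c := rfl
      set a := (EE h).symm γ with ha
      have hγ : γ = ∑ τ : G, i (a τ) * (g τ : Γ) := ((EE h).apply_symm_apply γ).symm
      have step1 : ∀ σ : G, ((g σ : Γ) • u ((γ • c) σ) : Y)
          = ∑ τ : G, ((i (a τ) * (g σ : Γ)) • u (c (τ⁻¹ * σ)) : Y) := by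
        intro σ
        rw [hc]
        show (g σ : Γ) • u (∑ τ : G, (φ σ⁻¹ (a τ)) • c (τ⁻¹ * σ)) = _
        rw [map_sum, Finset.smul_sum]
        refine Finset.sum_congr rfl fun τ _ => ?_
        have hu : u ((φ σ⁻¹ (a τ)) • c (τ⁻¹ * σ))
            = i (φ σ⁻¹ (a τ)) • u (c (τ⁻¹ * σ)) := u.hom.map_smul _ _
        rw [hu, smul_smul]
        congr 1
        rw [h.comm σ (φ σ⁻¹ (a τ)), aut_apply_inv]
      simp_rw [step1]
      rw [Finset.sum_comm]
      have step2 : ∀ τ : G, (∑ σ : G, ((i (a τ) * (g σ : Γ)) • u (c (τ⁻¹ * σ)) : Y))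
          = (i (a τ) * (g τ : Γ)) • ∑ ρ : G, ((g ρ : Γ) • u (c ρ) : Y) := by
        intro τ
        rw [Finset.smul_sum]
        refine Fintype.sum_equiv (Equiv.mulLeft τ⁻¹) _ _ fun σ => ?_
        simp only [Equiv.coe_mulLeft]
        rw [smul_smul, mul_assoc, ← Units.val_mul, ← map_mul g, mul_inv_cancel_left]
      simp_rw [step2]
      rw [← Finset.sum_smul, ← hγ]
    }

/-- Adjoint transposition for `Ind`. -/
noncomputable def Phi (h : IsSkewGroupAlgebra φ i g) {N : ModuleCat.{u} Λ}
    {Y : ModuleCat.{u} Γ} (f : Ind h N ⟶ Y) :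
    N ⟶ (ModuleCat.restrictScalars i).obj Y :=
  eta h N ≫ (ModuleCat.restrictScalars i).map f

lemma Phi_Psi (h : IsSkewGroupAlgebra φ i g) {N : ModuleCat.{u} Λ}
    {Y : ModuleCat.{u} Γ} (u : N ⟶ (ModuleCat.restrictScalars i).obj Y) :
    Phi h (Psi h u) = u := by
  classical
  refine ModuleCat.hom_ext (LinearMap.ext fun x => ?_)
  show Psi h u (eta h N x) = u x
  show (∑ σ : G, ((g σ : Γ) • u (eta h N x σ) : Y)) = u x
  have : ∀ σ : G, ((g σ : Γ) • u (eta h N x σ) : Y)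
      = if σ = 1 then ((g (1 : G) : Γ) • u x : Y) else 0 := fun σ => by
    rw [eta_apply h]
    split_ifs with hσ
    · subst hσ; rfl
    · simp
  simp_rw [this]
  rw [Finset.sum_ite_eq' Finset.univ (1 : G)]
  simp

lemma Psi_Phi (h : IsSkewGroupAlgebra φ i g) {N : ModuleCat.{u} Λ}
    {Y : ModuleCat.{u} Γ} (f : Ind h N ⟶ Y) :
    Psi h (Phi h f) = f := by
  classical
  refine ModuleCat.hom_ext (LinearMap.ext fun (c : G → N) => ?_)
  show (∑ σ : G, ((g σ : Γ) • Phi h f (c σ) : Y)) = f c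
  have h1 : ∀ σ : G, (Phi h f (c σ) : Y) = f (eta h N (c σ)) := fun σ => rfl
  have h2 : ∀ σ : G, ((g σ : Γ) • f (eta h N (c σ)) : Y)
      = f ((g σ : Γ) • eta h N (c σ)) := fun σ => (f.hom.map_smul _ _).symm
  have hsum : (∑ σ : G, ((g σ : Γ) • Phi h f (c σ) : Y))
      = f (∑ σ : G, ((g σ : Γ) • eta h N (c σ) : Ind h N)) := by
    exact (Finset.sum_congr rfl fun σ _ =>
      (congrArg (fun y => (g σ : Γ) • y) (h1 σ)).trans (h2 σ)).trans (map_sum f.hom _ _).symm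
  rw [hsum]
  congr 1
  have h3 : ∀ σ : G, ((g σ : Γ) • eta h N (c σ) : Ind h N)
      = (fun ρ => if ρ = σ then c σ else 0) := fun σ => by
    show indSMul φ ((EE h).symm (g σ : Γ)) (eta h N (c σ) : G → N) = _
    rw [co_unit h]
    have : (eta h N (c σ) : G → N) = fun τ => if τ = 1 then c σ else 0 := by
      funext τ; rw [eta_apply h]
    rw [this, indSMul_single]
  show (∑ σ : G, ((g σ : Γ) • eta h N (c σ) : Ind h N)) = c
  simp_rw [h3]
  funext ρ
  have : (∑ σ : G, (fun ρ' => if ρ' = σ then c σ else 0 : G → N)) ρ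
      = ∑ σ : G, (if ρ = σ then c σ else 0) := by
    rw [Finset.sum_apply]
  exact this.trans (by rw [Finset.sum_ite_eq Finset.univ ρ c]; simp)

/-- `F.obj N` is isomorphic to the concrete induced module `Ind N`. -/
noncomputable def indIso (h : IsSkewGroupAlgebra φ i g)
    (F : ModuleCat.{u} Λ ⥤ ModuleCat.{u} Γ)
    (adj : F ⊣ ModuleCat.restrictScalars i) (N : ModuleCat.{u} Λ) :
    F.obj N ≅ Ind h N where
  hom := (adj.homEquiv N (Ind h N)).symm (eta h N)
  inv := Psi h (adj.unit.app N)
  hom_inv_id := by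
    apply (adj.homEquiv N (F.obj N)).injective
    rw [Adjunction.homEquiv_naturality_right, Equiv.apply_symm_apply]
    change Phi h (Psi h (adj.unit.app N)) = _
    rw [Phi_Psi h, Adjunction.homEquiv_unit, CategoryTheory.Functor.map_id]
    exact (Category.comp_id _).symm
  inv_hom_id := by
    have hinj : Function.Injective
        (Phi h (N := N) (Y := Ind h N)) :=
      Function.LeftInverse.injective (fun f => Psi_Phi h f)
    apply hinj
    show eta h N ≫ (ModuleCat.restrictScalars i).map
        (Psi h (adj.unit.app N) ≫ (adj.homEquiv N (Ind h N)).symm (eta h N)) = Phi h (𝟙 _)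
    rw [Functor.map_comp, ← Category.assoc]
    change Phi h (Psi h (adj.unit.app N)) ≫ _ = _
    rw [Phi_Psi h]
    have h4 := (adj.homEquiv N (Ind h N)).apply_symm_apply (eta h N)
    rw [Adjunction.homEquiv_unit] at h4
    rw [h4]
    show eta h N = Phi h (𝟙 _)
    rw [Phi, CategoryTheory.Functor.map_id, Category.comp_id]

end SkewAux

/-- Let `Λ` be an Artin algebra, `G` a finite group of order `n` acting on `Λ` with `n`
invertible in `Λ`, and `Γ = ΛG` the skew group algebra. For finitely generated left
`Λ`-modules `M` and `N` with `N` `G`-stable, there is an isomorphism of abelian groups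
`Hom_Γ(F M, F N) ≅ (Hom_Λ(M, N))ⁿ`, where `F = Γ ⊗_Λ -` is the induction functor
(encoded as a left adjoint of the restriction of scalars functor). -/
theorem hom_induction_equiv_pow
    (R : Type u) [CommRing R] [IsArtinianRing R] [Algebra R Λ] [Module.Finite R Λ]
    (φ : G →* RingAut Λ) (i : Λ →+* Γ) (g : G →* Γˣ)
    (hskew : IsSkewGroupAlgebra φ i g)
    (hinv : IsUnit (Fintype.card G : Λ))
    (F : ModuleCat.{u} Λ ⥤ ModuleCat.{u} Γ)
    (adj : F ⊣ ModuleCat.restrictScalars i)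
    (M N : ModuleCat.{u} Λ) (hM : Module.Finite Λ M) (hN : Module.Finite Λ N)
    (hNstable : IsGStable φ N) :
    Nonempty ((F.obj M ⟶ F.obj N) ≃+ (Fin (Fintype.card G) → (M ⟶ N))) := by
  classical
  open SkewAux in
  refine ⟨?_⟩
  -- iso between F.obj N and the concrete induced module
  let ι : F.obj N ≅ SkewAux.Ind hskew N := SkewAux.indIso hskew F adj N
  -- Step 1: compose with the iso
  let e1 : (F.obj M ⟶ F.obj N) ≃+ (F.obj M ⟶ SkewAux.Ind hskew N) :=
  { toFun := fun f => f ≫ ι.hom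
    invFun := fun f => f ≫ ι.inv
    left_inv := fun f => by simp
    right_inv := fun f => by simp
    map_add' := fun f f' => Preadditive.add_comp _ _ _ _ _ _ }
  -- Step 2: the adjunction
  let e2 : (F.obj M ⟶ SkewAux.Ind hskew N)
      ≃+ (M ⟶ (ModuleCat.restrictScalars i).obj (SkewAux.Ind hskew N)) :=
  { adj.homEquiv M (SkewAux.Ind hskew N) with
    map_add' := fun f f' => by
      refine ModuleCat.hom_ext (LinearMap.ext fun x => ?_)
      have h1 : ∀ (k : F.obj M ⟶ SkewAux.Ind hskew N),
          adj.homEquiv M (SkewAux.Ind hskew N) k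
            = adj.unit.app M ≫ (ModuleCat.restrictScalars i).map k :=
        fun k => Adjunction.homEquiv_unit adj _ _ k
      show adj.homEquiv M (SkewAux.Ind hskew N) (f + f') x
        = adj.homEquiv M (SkewAux.Ind hskew N) f x + adj.homEquiv M (SkewAux.Ind hskew N) f' x
      rw [h1, h1, h1]
      show (f + f') (adj.unit.app M x) = f (adj.unit.app M x) + f' (adj.unit.app M x)
      rfl }
  -- choose isomorphisms witnessing G-stability
  let e : ∀ σ : G, twistModule φ σ N ≅ N := fun σ => (hNstable σ).some
  have e_hom_inv : ∀ (σ : G) (z : twistModule φ σ N), (e σ).inv ((e σ).hom z) = z := by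
    intro σ z
    exact congrArg (fun k => k.hom z) (e σ).hom_inv_id
  have e_inv_hom : ∀ (σ : G) (z : N), (e σ).hom ((e σ).inv z) = z := by
    intro σ z
    exact congrArg (fun k => k.hom z) (e σ).inv_hom_id
  -- Step 3: split into components and untwist
  let e3 : (M ⟶ (ModuleCat.restrictScalars i).obj (SkewAux.Ind hskew N))
      ≃+ (G → (M ⟶ N)) :=
  { toFun := fun u σ => u ≫ SkewAux.proj hskew N σ ≫ (e σ).hom
    invFun := fun v => SkewAux.intoInd hskew (fun σ => v σ ≫ (e σ).inv)
    left_inv := fun u => by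
      refine ModuleCat.hom_ext (LinearMap.ext fun x => funext fun σ => ?_)
      show (e σ).inv ((e σ).hom ((u x : G → N) σ)) = (u x : G → N) σ
      exact e_hom_inv σ _
    right_inv := fun v => by
      funext σ
      refine ModuleCat.hom_ext (LinearMap.ext fun x => ?_)
      show (e σ).hom ((e σ).inv (v σ x)) = v σ x
      rw [e_inv_hom]
    map_add' := fun u u' => by
      funext σ
      refine ModuleCat.hom_ext (LinearMap.ext fun x => ?_)
      show (e σ).hom ((u x : G → N) σ + (u' x : G → N) σ)
        = (e σ).hom ((u x : G → N) σ) + (e σ).hom ((u' x : G → N) σ)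
      exact map_add _ _ _ }
  -- Step 4: reindex by Fin (card G)
  let eq : G ≃ Fin (Fintype.card G) := Fintype.equivFin G
  let e4 : (G → (M ⟶ N)) ≃+ (Fin (Fintype.card G) → (M ⟶ N)) :=
  { toFun := fun v k => v (eq.symm k)
    invFun := fun w σ => w (eq σ)
    left_inv := fun v => by
      funext σ
      exact congrArg v (Equiv.symm_apply_apply eq σ)
    right_inv := fun w => by
      funext k
      exact congrArg w (Equiv.apply_symm_apply eq k)
    map_add' := fun v v' => rfl }
  exact e1.trans (e2.trans (e3.trans e4))
end
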